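/- arXiv:2207.09087 — 7 statements merged into one kernel-verified Lean document; each statement's English description precedes it below -/
import Mathlib

section
/- For all positive integers s, m with m ≥ 2 and every integer k with 1 ≤ k ≤ m−1, the ratio (Π_{i=1}^{k} C(is, s) · Π_{j=1}^{m−k} C(js, s)) / Π_{l=1}^{m} C(ls, s) is at most 1 / C(ms, s), and moreover C(ms, s) ≥ m^s, so the ratio is at most 1/m^s. -/
open Finset

lemma prodP (s k : ℕ) :
    (∏ i ∈ Finset.Icc 1 k, (i * s).choose s) * (s.factorial) ^ k = (k * s).factorial := by
  induction k with
  | zero => simp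
  | succ n ih =>
    rw [Finset.prod_Icc_succ_top (Nat.le_add_left 1 n)]
    have h : (n + 1) * s = n * s + s := by ring
    rw [h, pow_succ]
    have hc := Nat.add_choose_mul_factorial_mul_factorial (n * s) s
    calc (∏ i ∈ Finset.Icc 1 n, (i * s).choose s) * (n * s + s).choose s
          * (s.factorial ^ n * s.factorial)
        = (n * s + s).choose s * ((∏ i ∈ Finset.Icc 1 n, (i * s).choose s) * s.factorial ^ n)
          * s.factorial := by ring
      _ = (n * s + s).choose s * (n * s).factorial * s.factorial := by rw [ih]
      _ = (n * s + s).factorial := hc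

lemma key_eq (s m k : ℕ) (hk : k ≤ m) :
    (∏ i ∈ Finset.Icc 1 k, (i * s).choose s) * (∏ j ∈ Finset.Icc 1 (m-k), (j * s).choose s)
      * (m * s).choose (k * s) = ∏ l ∈ Finset.Icc 1 m, (l * s).choose s := by
  have h1 := prodP s k
  have h2 := prodP s (m - k)
  have h3 := prodP s m
  have hfac : 0 < (s.factorial) ^ m := pow_pos s.factorial_pos m
  apply Nat.eq_of_mul_eq_mul_right hfac
  have hsplit : (m - k) * s + k * s = m * s := by
    have h : m - k + k = m := Nat.sub_add_cancel hk
    calc (m - k) * s + k * s = (m - k + k) * s := by ring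
      _ = m * s := by rw [h]
  have hpow : s.factorial ^ k * s.factorial ^ (m - k) = s.factorial ^ m := by
    rw [← pow_add, Nat.add_sub_cancel' hk]
  calc (∏ i ∈ Finset.Icc 1 k, (i * s).choose s) *
        (∏ j ∈ Finset.Icc 1 (m-k), (j * s).choose s) * (m * s).choose (k * s)
        * s.factorial ^ m
      = (m * s).choose (k * s) * ((∏ i ∈ Finset.Icc 1 k, (i * s).choose s) * s.factorial ^ k)
        * ((∏ j ∈ Finset.Icc 1 (m-k), (j * s).choose s) * s.factorial ^ (m - k)) := by
        rw [← hpow]; ring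
    _ = (m * s).choose (k * s) * (k * s).factorial * ((m - k) * s).factorial := by
        rw [h1, h2]
    _ = ((m-k)*s + k*s).choose (k*s) * ((m-k)*s).factorial * (k*s).factorial := by
        rw [hsplit]; ring
    _ = (m * s).factorial := by
        rw [Nat.add_choose_mul_factorial_mul_factorial, hsplit]
    _ = (∏ l ∈ Finset.Icc 1 m, (l * s).choose s) * s.factorial ^ m := h3.symm

lemma choose_mono_half {n a b : ℕ} (hab : a ≤ b) (hb : 2 * b ≤ n) :
    n.choose a ≤ n.choose b := by
  induction b, hab using Nat.le_induction with
  | base => exact le_refl _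
  | succ b hb' ih =>
    have h1 : 2 * b ≤ n := by omega
    refine (ih h1).trans (Nat.choose_le_succ_of_lt_half_left ?_)
    omega

lemma choose_s_le (s m k : ℕ) (hk1 : 1 ≤ k) (hk2 : k ≤ m - 1) (hm : 2 ≤ m) :
    (m * s).choose s ≤ (m * s).choose (k * s) := by
  rcases le_or_gt (2 * k) m with h | h
  · exact choose_mono_half (Nat.le_mul_of_pos_left s hk1)
      (by calc 2 * (k * s) = (2 * k) * s := by ring
            _ ≤ m * s := Nat.mul_le_mul_right s h)
  · have hkm : k ≤ m := by omega
    have hms : m * s - k * s = (m - k) * s := (Nat.sub_mul m k s).symm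
    rw [← Nat.choose_symm (Nat.mul_le_mul_right s hkm), hms]
    refine choose_mono_half (Nat.le_mul_of_pos_left s (by omega)) ?_
    calc 2 * ((m - k) * s) = (2 * (m - k)) * s := by ring
      _ ≤ m * s := Nat.mul_le_mul_right s (by omega)

lemma pow_le_choose_mul (s m : ℕ) (hm : 1 ≤ m) : m ^ s ≤ (m * s).choose s := by
  have key : m ^ s * s.factorial ≤ (m * s).descFactorial s := by
    rw [Nat.descFactorial_eq_prod_range, ← Finset.prod_range_add_one_eq_factorial,
      ← Finset.prod_range_reflect (fun j => m * s - j) s]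
    have hms : m ^ s * ∏ x ∈ Finset.range s, (x + 1)
        = ∏ x ∈ Finset.range s, (m * (x + 1)) := by
      rw [Finset.prod_mul_distrib, Finset.prod_const, Finset.card_range]
    rw [hms]
    refine Finset.prod_le_prod' fun i hi => ?_
    simp only [Finset.mem_range] at hi
    have h1 : s - 1 - i = s - (i + 1) := by omega
    rw [h1]
    have h2 : i + 1 ≤ s := hi
    have h3 : m * (s - (i + 1)) + m * (i + 1) = m * s := by
      rw [← Nat.mul_add, Nat.sub_add_cancel h2]
    have h4 : s - (i + 1) ≤ m * (s - (i + 1)) := Nat.le_mul_of_pos_left _ hm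
    omega
  rw [Nat.descFactorial_eq_factorial_mul_choose, mul_comm (s.factorial)] at key
  exact Nat.le_of_mul_le_mul_right key (Nat.factorial_pos s)

/-- The regrouping-probability ratio of products of binomial coefficients is at most
`1 / C(ms, s)`, and `C(ms, s) ≥ m^s`, so the ratio is at most `1/m^s`. -/
theorem stmt1 (s m k : ℕ) (hs : 0 < s) (hm : 2 ≤ m) (hk1 : 1 ≤ k) (hk2 : k ≤ m - 1) :
    (((∏ i ∈ Finset.Icc 1 k, ((i * s).choose s : ℝ)) *
        ∏ j ∈ Finset.Icc 1 (m - k), ((j * s).choose s : ℝ)) /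
        ∏ l ∈ Finset.Icc 1 m, ((l * s).choose s : ℝ) ≤ 1 / ((m * s).choose s : ℝ)) ∧
    ((m : ℝ) ^ s ≤ ((m * s).choose s : ℝ)) ∧
    (((∏ i ∈ Finset.Icc 1 k, ((i * s).choose s : ℝ)) *
        ∏ j ∈ Finset.Icc 1 (m - k), ((j * s).choose s : ℝ)) /
        ∏ l ∈ Finset.Icc 1 m, ((l * s).choose s : ℝ) ≤ 1 / (m : ℝ) ^ s) := by
  have hkm : k ≤ m := by omega
  have hkey := key_eq s m k hkm
  have hPk : (0:ℝ) < ∏ i ∈ Finset.Icc 1 k, ((i * s).choose s : ℝ) :=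
    Finset.prod_pos fun i hi => by
      have := Nat.choose_pos (show s ≤ i * s from Nat.le_mul_of_pos_left s
        (by simp at hi; omega))
      positivity
  have hPmk : (0:ℝ) < ∏ j ∈ Finset.Icc 1 (m-k), ((j * s).choose s : ℝ) :=
    Finset.prod_pos fun j hj => by
      have := Nat.choose_pos (show s ≤ j * s from Nat.le_mul_of_pos_left s
        (by simp at hj; omega))
      positivity
  have hCpos : 0 < (m * s).choose (k * s) :=
    Nat.choose_pos (Nat.mul_le_mul_right s hkm)
  have hPm : (0:ℝ) < ∏ l ∈ Finset.Icc 1 m, ((l * s).choose s : ℝ) :=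
    Finset.prod_pos fun l hl => by
      have := Nat.choose_pos (show s ≤ l * s from Nat.le_mul_of_pos_left s
        (by simp at hl; omega))
      positivity
  have hkeyR : ((∏ i ∈ Finset.Icc 1 k, ((i * s).choose s : ℝ)) *
      ∏ j ∈ Finset.Icc 1 (m-k), ((j * s).choose s : ℝ)) * ((m * s).choose (k * s) : ℝ)
      = ∏ l ∈ Finset.Icc 1 m, ((l * s).choose s : ℝ) := by
    have := congrArg (fun n : ℕ => (n : ℝ)) hkey
    push_cast at this
    exact this
  have hratio : ((∏ i ∈ Finset.Icc 1 k, ((i * s).choose s : ℝ)) *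
      ∏ j ∈ Finset.Icc 1 (m-k), ((j * s).choose s : ℝ)) /
      (∏ l ∈ Finset.Icc 1 m, ((l * s).choose s : ℝ))
      = 1 / ((m * s).choose (k * s) : ℝ) := by
    rw [← hkeyR]
    have hC0 : ((m * s).choose (k * s) : ℝ) ≠ 0 := by positivity
    field_simp
  have hCs : ((m*s).choose s : ℝ) ≤ ((m * s).choose (k * s) : ℝ) := by
    exact_mod_cast choose_s_le s m k hk1 hk2 hm
  have hCs0 : (0:ℝ) < ((m*s).choose s : ℝ) := by
    have := Nat.choose_pos (show s ≤ m * s from Nat.le_mul_of_pos_left s (by omega))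
    positivity
  have h1 : ((∏ i ∈ Finset.Icc 1 k, ((i * s).choose s : ℝ)) *
      ∏ j ∈ Finset.Icc 1 (m-k), ((j * s).choose s : ℝ)) /
      (∏ l ∈ Finset.Icc 1 m, ((l * s).choose s : ℝ)) ≤ 1 / ((m*s).choose s : ℝ) := by
    rw [hratio]
    apply one_div_le_one_div_of_le hCs0 hCs
  have h2 : (m : ℝ) ^ s ≤ ((m * s).choose s : ℝ) := by
    exact_mod_cast pow_le_choose_mul s m (by omega)
  refine ⟨h1, h2, h1.trans (one_div_le_one_div_of_le (by positivity) h2)⟩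
end

section
/- Let x_1,...,x_n ∈ ℝ^d with ‖x_i‖₂ ≤ 1, y_i ∈ {−1,1}, and let θ_t satisfy θ_t = θ_{t−1} − (η/(4s)) Σ_{i∈B_t} (θ_{t−1}ᵀx_i − 2y_i) x_i with constant learning rate η > 0 and batches B_t of size s. Suppose max_{1≤i≤n} |θ_0ᵀx_i| = ε < 2. Then for every iteration t with 1 ≤ t ≤ T_ε := ⌈log_{1+η/4}(4/(2+ε))⌉ and every i ∈ {1,...,n}, |θ_{t−1}ᵀx_i| < 2; consequently, for i ∈ B_t, the coefficient f_{i,t} := θ_{t−1}ᵀx_i − 2y_i satisfies sign(f_{i,t}) = −y_i. -/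
open Finset
open scoped RealInnerProductSpace

/-- If `max_i |θ_0ᵀx_i| = ε < 2`, then for every iteration
`1 ≤ t ≤ ⌈log_{1+η/4}(4/(2+ε))⌉` all full inner products satisfy `|θ_{t-1}ᵀx_i| < 2`,
hence `sign(f_{i,t}) = -y_i` for the batch coefficients `f_{i,t} = θ_{t-1}ᵀx_i - 2y_i`. -/
theorem stmt6 (d n s : ℕ) (hn : 0 < n) (hs : 0 < s)
    (x : Fin n → EuclideanSpace ℝ (Fin d)) (hx : ∀ i, ‖x i‖ ≤ 1)
    (y : Fin n → ℝ) (hy : ∀ i, y i = 1 ∨ y i = -1)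
    (B : ℕ → Finset (Fin n)) (hB : ∀ t, (B t).card = s)
    (η : ℝ) (hη : 0 < η)
    (θ : ℕ → EuclideanSpace ℝ (Fin d))
    (hupd : ∀ t : ℕ, 1 ≤ t →
      θ t = θ (t - 1) - (η / (4 * s)) •
        ∑ i ∈ B t, (⟪θ (t - 1), x i⟫ - 2 * y i) • x i)
    (ε : ℝ) (hε : (⨆ i, |⟪θ 0, x i⟫|) = ε) (hε2 : ε < 2) :
    ∀ t : ℕ, 1 ≤ t → (t : ℤ) ≤ ⌈Real.logb (1 + η / 4) (4 / (2 + ε))⌉ →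
      (∀ i, |⟪θ (t - 1), x i⟫| < 2) ∧
      ∀ i ∈ B t, Real.sign (⟪θ (t - 1), x i⟫ - 2 * y i) = -y i := by
  intro t ht htT
  set b : ℝ := 1 + η / 4 with hbdef
  have hb1 : 1 < b := by simp only [hbdef]; linarith
  have hεnn : 0 ≤ ε := by
    rw [← hε]
    have h0 : |⟪θ 0, x ⟨0, hn⟩⟫| ≤ ⨆ i, |⟪θ 0, x i⟫| :=
      le_ciSup (f := fun i => |⟪θ 0, x i⟫|) (Set.Finite.bddAbove (Set.finite_range _)) ⟨0, hn⟩
    exact le_trans (abs_nonneg _) h0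
  have hs' : (0:ℝ) < s := by exact_mod_cast hs
  have key : ∀ u : ℕ, ∀ i, |⟪θ u, x i⟫| ≤ b ^ u * (ε + 2) - 2 := by
    intro u
    induction u with
    | zero =>
      intro i
      simp only [pow_zero, one_mul]
      have h0 : |⟪θ 0, x i⟫| ≤ ε := by
        rw [← hε]
        exact le_ciSup (f := fun i => |⟪θ 0, x i⟫|) (Set.Finite.bddAbove (Set.finite_range _)) i
      linarith
    | succ u ih =>
      intro j
      have hupd' := hupd (u+1) (by omega)
      simp only [Nat.add_sub_cancel] at hupd'
      have hbu : (1:ℝ) ≤ b ^ u := one_le_pow₀ (le_of_lt hb1)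
      have hinner : ⟪θ (u+1), x j⟫ =
          ⟪θ u, x j⟫ - (η / (4*s)) * ∑ i ∈ B (u+1), (⟪θ u, x i⟫ - 2 * y i) * ⟪x i, x j⟫ := by
        rw [hupd', inner_sub_left, real_inner_smul_left, sum_inner]
        congr 2
        exact Finset.sum_congr rfl fun i _ => real_inner_smul_left _ _ _
      have hterm : ∀ i ∈ B (u+1),
          |(⟪θ u, x i⟫ - 2 * y i) * ⟪x i, x j⟫| ≤ b ^ u * (ε + 2) := by
        intro i _
        have h1 : |⟪θ u, x i⟫ - 2 * y i| ≤ b ^ u * (ε + 2) := by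
          have := ih i
          have hyi : |y i| = 1 := by rcases hy i with h | h <;> simp [h]
          calc |⟪θ u, x i⟫ - 2 * y i| ≤ |⟪θ u, x i⟫| + |2 * y i| := abs_sub _ _
            _ ≤ (b ^ u * (ε + 2) - 2) + 2 := by
                rw [abs_mul, hyi, mul_one]
                have habs2 : |(2:ℝ)| = 2 := by norm_num
                rw [habs2]; linarith
            _ = b ^ u * (ε + 2) := by ring
        have h2 : |⟪x i, x j⟫| ≤ 1 := by
          calc |⟪x i, x j⟫| ≤ ‖x i‖ * ‖x j‖ := abs_real_inner_le_norm _ _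
            _ ≤ 1 * 1 := mul_le_mul (hx i) (hx j) (norm_nonneg _) (by linarith [hx i, norm_nonneg (x i)])
            _ = 1 := by ring
        calc |(⟪θ u, x i⟫ - 2 * y i) * ⟪x i, x j⟫|
            = |⟪θ u, x i⟫ - 2 * y i| * |⟪x i, x j⟫| := abs_mul _ _
          _ ≤ (b ^ u * (ε + 2)) * 1 := by
              apply mul_le_mul h1 h2 (abs_nonneg _)
              nlinarith
          _ = b ^ u * (ε + 2) := by ring
      have hsum : |∑ i ∈ B (u+1), (⟪θ u, x i⟫ - 2 * y i) * ⟪x i, x j⟫|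
          ≤ s * (b ^ u * (ε + 2)) := by
        calc |∑ i ∈ B (u+1), (⟪θ u, x i⟫ - 2 * y i) * ⟪x i, x j⟫|
            ≤ ∑ i ∈ B (u+1), |(⟪θ u, x i⟫ - 2 * y i) * ⟪x i, x j⟫| :=
              Finset.abs_sum_le_sum_abs _ _
          _ ≤ ∑ _i ∈ B (u+1), b ^ u * (ε + 2) := Finset.sum_le_sum hterm
          _ = s * (b ^ u * (ε + 2)) := by
              rw [Finset.sum_const, hB, nsmul_eq_mul]
      have hcoef : 0 < η / (4*s) := by positivity
      calc |⟪θ (u+1), x j⟫|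
          ≤ |⟪θ u, x j⟫| + (η / (4*s)) * |∑ i ∈ B (u+1), (⟪θ u, x i⟫ - 2 * y i) * ⟪x i, x j⟫| := by
            rw [hinner]
            calc |⟪θ u, x j⟫ - (η / (4*s)) * ∑ i ∈ B (u+1), (⟪θ u, x i⟫ - 2 * y i) * ⟪x i, x j⟫|
                ≤ |⟪θ u, x j⟫| + |(η / (4*s)) * ∑ i ∈ B (u+1), (⟪θ u, x i⟫ - 2 * y i) * ⟪x i, x j⟫| :=
                  abs_sub _ _
              _ = _ := by rw [abs_mul, abs_of_pos hcoef]
        _ ≤ (b ^ u * (ε + 2) - 2) + (η / (4*s)) * (s * (b ^ u * (ε + 2))) := by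
            have := ih j
            have h3 : (η / (4*s)) * |∑ i ∈ B (u+1), (⟪θ u, x i⟫ - 2 * y i) * ⟪x i, x j⟫|
                ≤ (η / (4*s)) * (s * (b ^ u * (ε + 2))) :=
              mul_le_mul_of_nonneg_left hsum (le_of_lt hcoef)
            linarith
        _ = b ^ (u+1) * (ε + 2) - 2 := by
            field_simp
            ring
  refine ⟨?_, ?_⟩
  · intro i
    have h1 := key (t-1) i
    have hfr : (0:ℝ) < 2 + ε := by linarith
    have hrat : (1:ℝ) < 4 / (2 + ε) := by
      rw [lt_div_iff₀ hfr]; linarith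
    have hL : ((t-1 : ℕ) : ℝ) < Real.logb b (4 / (2+ε)) := by
      have h2 : ((t:ℤ) : ℝ) ≤ ((⌈Real.logb b (4/(2+ε))⌉ : ℤ) : ℝ) := by exact_mod_cast htT
      have h3 : ((⌈Real.logb b (4/(2+ε))⌉ : ℤ) : ℝ) < Real.logb b (4/(2+ε)) + 1 :=
        Int.ceil_lt_add_one _
      have h4 : ((t-1 : ℕ):ℝ) = (t:ℝ) - 1 := by
        rw [Nat.cast_sub ht]; norm_num
      push_cast at h2
      rw [h4]; linarith
    have hpow : b ^ (t-1) < 4/(2+ε) := by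
      have h5 : b ^ (((t-1:ℕ)):ℝ) < b ^ Real.logb b (4/(2+ε)) :=
        (Real.rpow_lt_rpow_left_iff hb1).mpr hL
      rw [Real.rpow_natCast, Real.rpow_logb (by linarith) (by linarith) (by positivity)] at h5
      exact h5
    have : b ^ (t-1) * (ε + 2) < 4 := by
      have := (mul_lt_mul_of_pos_right hpow (by linarith : (0:ℝ) < ε + 2))
      calc b ^ (t-1) * (ε + 2) < 4/(2+ε) * (ε + 2) := this
        _ = 4 := by field_simp; ring
    linarith
  · intro i hi
    have hlt : |⟪θ (t-1), x i⟫| < 2 := by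
      have h1 := key (t-1) i
      have hfr : (0:ℝ) < 2 + ε := by linarith
      have hL : ((t-1 : ℕ) : ℝ) < Real.logb b (4 / (2+ε)) := by
        have h2 : ((t:ℤ) : ℝ) ≤ ((⌈Real.logb b (4/(2+ε))⌉ : ℤ) : ℝ) := by exact_mod_cast htT
        have h3 : ((⌈Real.logb b (4/(2+ε))⌉ : ℤ) : ℝ) < Real.logb b (4/(2+ε)) + 1 :=
          Int.ceil_lt_add_one _
        have h4 : ((t-1 : ℕ):ℝ) = (t:ℝ) - 1 := by
          rw [Nat.cast_sub ht]; norm_num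
        push_cast at h2
        rw [h4]; linarith
      have hpow : b ^ (t-1) < 4/(2+ε) := by
        have h5 : b ^ (((t-1:ℕ)):ℝ) < b ^ Real.logb b (4/(2+ε)) :=
          (Real.rpow_lt_rpow_left_iff hb1).mpr hL
        rw [Real.rpow_natCast, Real.rpow_logb (by linarith) (by linarith) (by positivity)] at h5
        exact h5
      have : b ^ (t-1) * (ε + 2) < 4 := by
        have h6 := (mul_lt_mul_of_pos_right hpow (by linarith : (0:ℝ) < ε + 2))
        calc b ^ (t-1) * (ε + 2) < 4/(2+ε) * (ε + 2) := h6
          _ = 4 := by field_simp; ring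
      linarith
    rw [abs_lt] at hlt
    rcases hy i with h | h
    · rw [h]
      have : ⟪θ (t-1), x i⟫ - 2 * 1 < 0 := by linarith [hlt.2]
      rw [Real.sign_of_neg this]
    · rw [h]
      have : 0 < ⟪θ (t-1), x i⟫ - 2 * (-1) := by linarith [hlt.1]
      rw [Real.sign_of_pos this]
      norm_num
end

section
/- Let x_1,...,x_n ∈ ℝ^d with ‖x_i‖₂ ≤ 1, y_i ∈ {−1,1}, and let θ_t satisfy θ_t = θ_{t−1} − (η/(4s)) Σ_{i∈B_t} (θ_{t−1}ᵀx_i − 2y_i) x_i with constant learning rate η > 0 and batches B_t of size s. If θ_0 = 0 (zero initialization), then for every iteration t with 1 ≤ t ≤ T_0 := ⌈log_{1+η/4} 2⌉ and every i ∈ {1,...,n}, |θ_{t−1}ᵀx_i| < 2, hence sign(θ_{t−1}ᵀx_i − 2y_i) = −y_i for all i ∈ B_t. -/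
open Finset
open scoped RealInnerProductSpace

/-- Under zero initialization `θ_0 = 0`, for every iteration
`1 ≤ t ≤ T_0 := ⌈log_{1+η/4} 2⌉` all full inner products satisfy `|θ_{t-1}ᵀx_i| < 2`,
hence `sign(θ_{t-1}ᵀx_i - 2y_i) = -y_i` for all `i` in the batch. -/
theorem stmt7 (d n s : ℕ) (hn : 0 < n) (hs : 0 < s)
    (x : Fin n → EuclideanSpace ℝ (Fin d)) (hx : ∀ i, ‖x i‖ ≤ 1)
    (y : Fin n → ℝ) (hy : ∀ i, y i = 1 ∨ y i = -1)
    (B : ℕ → Finset (Fin n)) (hB : ∀ t, (B t).card = s)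
    (η : ℝ) (hη : 0 < η)
    (θ : ℕ → EuclideanSpace ℝ (Fin d))
    (hθ0 : θ 0 = 0)
    (hupd : ∀ t : ℕ, 1 ≤ t →
      θ t = θ (t - 1) - (η / (4 * s)) •
        ∑ i ∈ B t, (⟪θ (t - 1), x i⟫ - 2 * y i) • x i) :
    ∀ t : ℕ, 1 ≤ t → (t : ℤ) ≤ ⌈Real.logb (1 + η / 4) 2⌉ →
      (∀ i, |⟪θ (t - 1), x i⟫| < 2) ∧
      ∀ i ∈ B t, Real.sign (⟪θ (t - 1), x i⟫ - 2 * y i) = -y i := by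
  set r : ℝ := 1 + η / 4 with hr
  have hr1 : 1 < r := by simp only [hr]; linarith
  have hr0 : (0:ℝ) < r := by linarith
  have hs' : (0:ℝ) < (s : ℝ) := by exact_mod_cast hs
  -- main inductive norm bound
  have key : ∀ t : ℕ, ‖θ t‖ ≤ 2 * (r ^ t - 1) := by
    intro t
    induction t with
    | zero => simp [hθ0]
    | succ k ih =>
      have h1 := hupd (k + 1) (by omega)
      simp only [Nat.add_sub_cancel] at h1
      have hsum : ‖∑ i ∈ B (k+1), (⟪θ k, x i⟫ - 2 * y i) • x i‖
          ≤ (s : ℝ) * (‖θ k‖ + 2) := by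
        calc ‖∑ i ∈ B (k+1), (⟪θ k, x i⟫ - 2 * y i) • x i‖
            ≤ ∑ i ∈ B (k+1), ‖(⟪θ k, x i⟫ - 2 * y i) • x i‖ := norm_sum_le _ _
          _ ≤ ∑ _i ∈ B (k+1), (‖θ k‖ + 2) := by
              apply Finset.sum_le_sum
              intro i _
              rw [norm_smul, Real.norm_eq_abs]
              have hx' := hx i
              have hxn : (0:ℝ) ≤ ‖x i‖ := norm_nonneg _
              have hi : |⟪θ k, x i⟫| ≤ ‖θ k‖ := by
                have := abs_real_inner_le_norm (θ k) (x i)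
                nlinarith [norm_nonneg (θ k)]
              have hyi : |y i| = 1 := by rcases hy i with h | h <;> simp [h]
              have hc : |⟪θ k, x i⟫ - 2 * y i| ≤ ‖θ k‖ + 2 := by
                have h2 := abs_sub (⟪θ k, x i⟫) (2 * y i)
                rw [abs_mul, hyi] at h2
                simp only [abs_two, mul_one] at h2
                linarith
              have habs : (0:ℝ) ≤ |⟪θ k, x i⟫ - 2 * y i| := abs_nonneg _
              nlinarith [norm_nonneg (θ k)]
          _ = (s : ℝ) * (‖θ k‖ + 2) := by
              rw [Finset.sum_const, hB (k+1), nsmul_eq_mul]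
      have hcoef : (0:ℝ) < η / (4 * s) := by positivity
      have h2 : ‖θ (k+1)‖ ≤ ‖θ k‖ + (η / (4 * s)) * ((s : ℝ) * (‖θ k‖ + 2)) := by
        rw [h1]
        have := norm_sub_le (θ k)
          ((η / (4 * s)) • ∑ i ∈ B (k+1), (⟪θ k, x i⟫ - 2 * y i) • x i)
        rw [norm_smul, Real.norm_eq_abs, abs_of_pos hcoef] at this
        have := mul_le_mul_of_nonneg_left hsum (le_of_lt hcoef)
        linarith
      have heq : (η / (4 * s)) * ((s : ℝ) * (‖θ k‖ + 2)) = (η / 4) * (‖θ k‖ + 2) := by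
        field_simp
      rw [heq] at h2
      have hpow : r ^ (k + 1) = r ^ k * r := pow_succ r k
      have h3 := mul_le_mul_of_nonneg_left ih (le_of_lt hr0)
      rw [hpow, hr]
      nlinarith [h3, h2, norm_nonneg (θ k)]
  intro t ht htT
  -- r ^ (t - 1) < 2
  have hL : Real.logb r 2 > 0 := Real.logb_pos hr1 (by norm_num)
  have htR : (t : ℝ) - 1 < Real.logb r 2 := by
    have h1 : ((t : ℝ)) ≤ (⌈Real.logb r 2⌉ : ℝ) := by exact_mod_cast htT
    have h2 : ((⌈Real.logb r 2⌉ : ℝ)) < Real.logb r 2 + 1 := Int.ceil_lt_add_one _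
    linarith
  have hrt : r ^ (t - 1) < 2 := by
    have hcast : ((t - 1 : ℕ) : ℝ) = (t : ℝ) - 1 := by
      have := Nat.cast_sub ht (R := ℝ); simpa using this
    have h1 : r ^ (t - 1) = r ^ (((t - 1 : ℕ) : ℝ)) := (Real.rpow_natCast r (t-1)).symm
    rw [h1, hcast]
    calc r ^ ((t : ℝ) - 1) < r ^ (Real.logb r 2) :=
          (Real.rpow_lt_rpow_left_iff hr1).mpr htR
      _ = 2 := Real.rpow_logb hr0 (ne_of_gt hr1) (by norm_num)
  have hnorm : ‖θ (t - 1)‖ < 2 := by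
    have := key (t - 1)
    linarith
  have habs : ∀ i, |⟪θ (t - 1), x i⟫| < 2 := by
    intro i
    have h1 := abs_real_inner_le_norm (θ (t - 1)) (x i)
    have hx' := hx i
    have hxn : (0:ℝ) ≤ ‖x i‖ := norm_nonneg _
    nlinarith [norm_nonneg (θ (t - 1)), abs_nonneg (⟪θ (t-1), x i⟫)]
  refine ⟨habs, ?_⟩
  intro i _
  have h := abs_lt.mp (habs i)
  rcases hy i with hyi | hyi
  · rw [hyi]
    have : ⟪θ (t - 1), x i⟫ - 2 * 1 < 0 := by linarith [h.2]
    rw [Real.sign_of_neg this]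
  · rw [hyi]
    have : (0:ℝ) < ⟪θ (t - 1), x i⟫ - 2 * (-1) := by linarith [h.1]
    rw [Real.sign_of_pos this]
    norm_num
end

section
/- There exists an absolute constant c > 0 such that the following holds. For each t ∈ {1,...,T}, let X^A_t ∈ ℝ^{d_A×s} and X^B_t ∈ ℝ^{d_B×s} be matrices all of whose columns have Euclidean norm at most 1, let Z^A_t ~ N(0, σ_A² I_s) and Z^B_t ~ N(0, σ_B² I_s) be Gaussian vectors, and define e_t := (1/(4s))·(X^A_t Z^B_t ; X^B_t Z^A_t) ∈ ℝ^{d_A+d_B}. Set σ := max{σ_A, σ_B}. Then for every k ≥ 1, with probability at least 1 − 2T·exp(−ck), one has ‖e_t‖₂ ≤ √(k/s)·σ simultaneously for all t ∈ {1,...,T}. -/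
open MeasureTheory Finset ProbabilityTheory
open scoped NNReal ENNReal

lemma gauss_pdf_shift (v : ℝ≥0) (hv : v ≠ 0) (c x : ℝ) :
    gaussianPDFReal 0 v x * Real.exp (c * x)
      = Real.exp (c ^ 2 * v / 2) * gaussianPDFReal (c * v) v x := by
  have hv' : (v : ℝ) ≠ 0 := by exact_mod_cast hv
  simp only [gaussianPDFReal]
  rw [mul_assoc, ← Real.exp_add]
  rw [show Real.exp (c ^ 2 * v / 2) * ((Real.sqrt (2 * Real.pi * v))⁻¹ *
      Real.exp (-(x - c * v) ^ 2 / (2 * v)))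
    = (Real.sqrt (2 * Real.pi * v))⁻¹ *
      (Real.exp (c ^ 2 * v / 2) * Real.exp (-(x - c * v) ^ 2 / (2 * v))) by ring,
    ← Real.exp_add]
  congr 1
  field_simp
  ring

lemma gauss_mgf (v : ℝ≥0) (c : ℝ) :
    ∫⁻ x, ENNReal.ofReal (Real.exp (c * x)) ∂(gaussianReal 0 v)
      = ENNReal.ofReal (Real.exp (c ^ 2 * v / 2)) := by
  rcases eq_or_ne v 0 with hv | hv
  · subst hv
    rw [gaussianReal_zero_var, lintegral_dirac]
    simp
  · rw [gaussianReal_of_var_ne_zero _ hv, lintegral_withDensity_eq_lintegral_mul _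
      (measurable_gaussianPDF 0 v) (by fun_prop)]
    have : ∀ x : ℝ, (gaussianPDF 0 v * fun x => ENNReal.ofReal (Real.exp (c * x))) x
        = ENNReal.ofReal (Real.exp (c ^ 2 * v / 2)) * gaussianPDF (c * v) v x := by
      intro x
      simp only [Pi.mul_apply, gaussianPDF_def]
      rw [← ENNReal.ofReal_mul (gaussianPDFReal_nonneg 0 v x), gauss_pdf_shift v hv,
        ENNReal.ofReal_mul (Real.exp_pos _).le]
    simp_rw [this]
    rw [lintegral_const_mul _ (measurable_gaussianPDF _ v), lintegral_gaussianPDF_eq_one _ hv,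
      mul_one]

-- factorization of lintegral of product over Measure.pi (constant family over ℝ)
lemma lintegral_pi_prod : ∀ (s : ℕ) (μ : Measure ℝ) [IsProbabilityMeasure μ]
    (f : Fin s → ℝ → ℝ≥0∞), (∀ j, Measurable (f j)) →
    ∫⁻ z : Fin s → ℝ, ∏ j, f j (z j) ∂(Measure.pi fun _ => μ) = ∏ j, ∫⁻ x, f j x ∂μ := by
  intro s
  induction s with
  | zero =>
    intro μ _ f hf
    simp only [Finset.univ_eq_empty, Finset.prod_empty, lintegral_const, one_mul]
    rw [Measure.pi_univ]
    simp
  | succ n ih =>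
    intro μ _ f hf
    have hmp := measurePreserving_piFinSuccAbove (fun _ : Fin (n+1) => μ) 0
    have key : ∫⁻ z : Fin (n+1) → ℝ, ∏ j, f j (z j) ∂(Measure.pi fun _ => μ)
        = ∫⁻ p : ℝ × (Fin n → ℝ),
            f 0 p.1 * ∏ j : Fin n, f ((0 : Fin (n+1)).succAbove j) (p.2 j)
            ∂(μ.prod (Measure.pi fun _ => μ)) := by
      rw [← hmp.map_eq, lintegral_map]
      · apply lintegral_congr
        intro z
        rw [Fin.prod_univ_succAbove (fun j => f j (z j)) 0]
        rfl
      · exact (hf 0).comp measurable_fst |>.mul <| Finset.measurable_prod _ fun j _ =>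
          (hf _).comp ((measurable_pi_apply j).comp measurable_snd)
      · exact (MeasurableEquiv.piFinSuccAbove (fun _ => ℝ) 0).measurable
    rw [key, lintegral_prod_mul (f := f 0)
      (g := fun y : Fin n → ℝ => ∏ j, f ((0 : Fin (n+1)).succAbove j) (y j)) ((hf 0).aemeasurable)
      ((Finset.measurable_prod _ fun j _ => (hf _).comp (measurable_pi_apply j)).aemeasurable),
      ih μ (fun j => f ((0 : Fin (n+1)).succAbove j)) (fun j => hf _),
      Fin.prod_univ_succAbove (fun j => ∫⁻ x, f j x ∂μ) 0]

-- MGF of a linear form under product Gaussian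
lemma linform_mgf (s : ℕ) (v : ℝ≥0) (a : Fin s → ℝ) (c : ℝ) :
    ∫⁻ z : Fin s → ℝ, ENNReal.ofReal (Real.exp (c * ∑ j, a j * z j))
        ∂(Measure.pi fun _ => gaussianReal 0 v)
      = ENNReal.ofReal (Real.exp (c ^ 2 * (v * ∑ j, (a j) ^ 2) / 2)) := by
  have h1 : ∀ z : Fin s → ℝ, ENNReal.ofReal (Real.exp (c * ∑ j, a j * z j))
      = ∏ j, ENNReal.ofReal (Real.exp (c * a j * z j)) := by
    intro z
    rw [Finset.mul_sum, Real.exp_sum, ← ENNReal.ofReal_prod_of_nonneg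
      (fun i _ => (Real.exp_pos _).le)]
    simp_rw [mul_assoc]
  simp_rw [h1]
  rw [lintegral_pi_prod s (gaussianReal 0 v)
    (fun j x => ENNReal.ofReal (Real.exp (c * a j * x))) (fun j => by fun_prop)]
  simp_rw [gauss_mgf v]
  rw [← ENNReal.ofReal_prod_of_nonneg (fun i _ => (Real.exp_pos _).le), ← Real.exp_sum]
  congr 2
  have l1 : (∑ i : Fin s, (c * a i) ^ 2 * v / 2) = ∑ i : Fin s, c ^ 2 * v * (a i) ^ 2 / 2 :=
    Finset.sum_congr rfl fun j _ => by ring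
  have l2 : c ^ 2 * ((v : ℝ) * ∑ j, (a j) ^ 2) / 2 = ∑ i : Fin s, c ^ 2 * v * (a i) ^ 2 / 2 := by
    rw [Finset.mul_sum, Finset.mul_sum, Finset.sum_div]
    exact Finset.sum_congr rfl fun j _ => by ring
  rw [l1, l2]

lemma pow_le_fact_mul_exp {y : ℝ} (hy : 0 ≤ y) (n : ℕ) : y ^ n ≤ n.factorial * Real.exp y := by
  have h1 : y ^ n / n.factorial ≤ Real.exp y := by
    calc y ^ n / (n.factorial : ℝ)
        ≤ ∑ i ∈ Finset.range (n + 1), y ^ i / (i.factorial : ℝ) := by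
          refine Finset.single_le_sum (f := fun i => y ^ i / (i.factorial : ℝ))
            (fun i _ => by positivity) ?_
          simp
      _ ≤ Real.exp y := Real.sum_le_exp_of_nonneg hy _
  have h2 : (0:ℝ) < n.factorial := by exact_mod_cast n.factorial_pos
  calc y ^ n = n.factorial * (y ^ n / n.factorial) := by field_simp
    _ ≤ n.factorial * Real.exp y := mul_le_mul_of_nonneg_left h1 h2.le

lemma pow_exp_bound (n : ℕ) {L : ℝ} (hL : 0 < L) (x : ℝ) :
    x ^ (2 * n) ≤ (2 * n).factorial / L ^ (2 * n) * (Real.exp (L * x) + Real.exp (-L * x)) := by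
  have hx2 : x ^ (2 * n) = |x| ^ (2 * n) := by
    rw [pow_mul, pow_mul, sq_abs]
  have key : (L * |x|) ^ (2 * n) ≤ (2 * n).factorial * Real.exp (L * |x|) :=
    pow_le_fact_mul_exp (by positivity) _
  have habs : Real.exp (L * |x|) ≤ Real.exp (L * x) + Real.exp (-L * x) := by
    rcases abs_cases x with ⟨h, _⟩ | ⟨h, _⟩
    · rw [h]; nlinarith [Real.exp_pos (-L * x)]
    · rw [h, show L * -x = -L * x by ring]; nlinarith [Real.exp_pos (L * x)]
  have hLpow : (0:ℝ) < L ^ (2 * n) := by positivity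
  rw [hx2]
  rw [div_mul_eq_mul_div, le_div_iff₀ hLpow, mul_comm (|x| ^ (2*n)), ← mul_pow]
  calc (L * |x|) ^ (2*n) ≤ (2*n).factorial * Real.exp (L * |x|) := key
    _ ≤ (2*n).factorial * (Real.exp (L * x) + Real.exp (-L * x)) :=
        mul_le_mul_of_nonneg_left habs (by positivity)

lemma linform_pow_gen (s : ℕ) (v : ℝ≥0) (a : Fin s → ℝ) (m : ℕ) {L : ℝ} (hL : 0 < L) :
    ∫⁻ z : Fin s → ℝ, ENNReal.ofReal ((∑ j, a j * z j) ^ (2 * m))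
        ∂(Measure.pi fun _ => gaussianReal 0 v)
      ≤ ENNReal.ofReal ((2 * m).factorial / L ^ (2 * m)
          * (2 * Real.exp (L ^ 2 * (v * ∑ j, (a j) ^ 2) / 2))) := by
  set ν := (Measure.pi fun _ : Fin s => gaussianReal 0 v)
  have hW : Measurable fun z : Fin s → ℝ => ∑ j, a j * z j := by fun_prop
  calc ∫⁻ z, ENNReal.ofReal ((∑ j, a j * z j) ^ (2 * m)) ∂ν
      ≤ ∫⁻ z, ENNReal.ofReal ((2 * m).factorial / L ^ (2 * m))
          * (ENNReal.ofReal (Real.exp (L * ∑ j, a j * z j))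
            + ENNReal.ofReal (Real.exp (-L * ∑ j, a j * z j))) ∂ν := by
        refine lintegral_mono fun z => ?_
        rw [← ENNReal.ofReal_add (Real.exp_pos _).le (Real.exp_pos _).le,
          ← ENNReal.ofReal_mul (by positivity)]
        exact ENNReal.ofReal_le_ofReal (pow_exp_bound m hL _)
    _ = ENNReal.ofReal ((2 * m).factorial / L ^ (2 * m))
          * (ENNReal.ofReal (Real.exp (L ^ 2 * (v * ∑ j, (a j) ^ 2) / 2))
            + ENNReal.ofReal (Real.exp ((-L) ^ 2 * (v * ∑ j, (a j) ^ 2) / 2))) := by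
        rw [lintegral_const_mul _ (by fun_prop), lintegral_add_left (by fun_prop),
          linform_mgf, linform_mgf]
    _ ≤ ENNReal.ofReal ((2 * m).factorial / L ^ (2 * m)
          * (2 * Real.exp (L ^ 2 * (v * ∑ j, (a j) ^ 2) / 2))) := by
        rw [neg_pow, ENNReal.ofReal_mul (by positivity),
          ← ENNReal.ofReal_add (Real.exp_pos _).le (by positivity)]
        apply le_of_eq
        congr 1
        rw [show ((-1:ℝ)) ^ 2 * L ^ 2 = L ^ 2 by ring, two_mul]

lemma add_factorial_le (m : ℕ) : ∀ n : ℕ, (m + n).factorial ≤ (m + n) ^ n * m.factorial := by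
  intro n
  induction n with
  | zero => simp
  | succ n ih =>
    calc (m + (n+1)).factorial = (m + n + 1) * (m + n).factorial := by
          rw [show m + (n+1) = (m + n) + 1 by ring, Nat.factorial_succ]
      _ ≤ (m + n + 1) * ((m + n) ^ n * m.factorial) := Nat.mul_le_mul_left _ ih
      _ ≤ (m + n + 1) * ((m + n + 1) ^ n * m.factorial) := by
          exact Nat.mul_le_mul_left _ (Nat.mul_le_mul_right _ (Nat.pow_le_pow_left (by omega) n))
      _ = (m + (n+1)) ^ (n+1) * m.factorial := by ring_nf
  
lemma two_mul_factorial_le (m : ℕ) : ((2 * m).factorial : ℝ) ≤ ((2 * m : ℕ) : ℝ) ^ m * (m : ℝ) ^ m := by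
  have h : (2 * m).factorial ≤ (2 * m) ^ m * m ^ m := by
    calc (2 * m).factorial = (m + m).factorial := by rw [two_mul]
      _ ≤ (m + m) ^ m * m.factorial := add_factorial_le m m
      _ ≤ (m + m) ^ m * m ^ m := Nat.mul_le_mul_left _ m.factorial_le_pow
      _ = (2 * m) ^ m * m ^ m := by rw [two_mul]
  exact_mod_cast h

lemma linform_moment (s : ℕ) (v : ℝ≥0) (a : Fin s → ℝ) (m : ℕ) (hm : 1 ≤ m) :
    ∫⁻ z : Fin s → ℝ, ENNReal.ofReal ((∑ j, a j * z j) ^ (2 * m))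
        ∂(Measure.pi fun _ => gaussianReal 0 v)
      ≤ ENNReal.ofReal (2 * (Real.exp 1 * (m * (v * ∑ j, (a j) ^ 2))) ^ m) := by
  set S : ℝ := (v : ℝ) * ∑ j, (a j) ^ 2 with hS
  have hS0 : 0 ≤ S := by positivity
  rcases hS0.lt_or_eq with hSpos | hSzero
  · -- S > 0 : take L = sqrt (2m/S)
    set L : ℝ := Real.sqrt (2 * m / S) with hLdef
    have hL : 0 < L := Real.sqrt_pos.mpr (by positivity)
    have hL2 : L ^ 2 = 2 * m / S := Real.sq_sqrt (by positivity)
    refine (linform_pow_gen s v a m hL).trans ?_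
    apply ENNReal.ofReal_le_ofReal
    have hLpow : L ^ (2 * m) = (2 * m / S) ^ m := by
      rw [show 2 * m = m * 2 by ring, pow_mul', hL2]
    have hexp : Real.exp (L ^ 2 * S / 2) = Real.exp 1 ^ m := by
      have harg : L ^ 2 * S / 2 = (m : ℝ) * 1 := by
        rw [hL2]; field_simp
      rw [harg, Real.exp_nat_mul]
    rw [hLpow, hexp]
    have h2m : (0:ℝ) < (2 * m : ℝ) := by positivity
    have hfact := two_mul_factorial_le m
    have hdiv : ((2*m).factorial : ℝ) / (2 * m / S) ^ m = ((2*m).factorial : ℝ) * (S / (2*m)) ^ m := by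
      rw [div_eq_mul_inv, ← inv_pow, inv_div]
    rw [hdiv]
    calc ((2*m).factorial : ℝ) * (S / (2*m)) ^ m * (2 * Real.exp 1 ^ m)
        ≤ ((2*m:ℕ):ℝ) ^ m * (m:ℝ) ^ m * (S / (2*m)) ^ m * (2 * Real.exp 1 ^ m) := by
          have : (0:ℝ) ≤ (S / (2*m)) ^ m * (2 * Real.exp 1 ^ m) := by positivity
          nlinarith [hfact, this]
      _ = 2 * (Real.exp 1 * (m * S)) ^ m := by
          push_cast
          rw [mul_pow, mul_pow, mul_pow, div_pow]
          field_simp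
          ring
  · -- S = 0
    have hz : ENNReal.ofReal (2 * (Real.exp 1 * ((m : ℝ) * (v * ∑ j, (a j) ^ 2))) ^ m) = 0 := by
      rw [← hS, ← hSzero]
      simp [zero_pow (by omega : m ≠ 0)]
    rw [hz]
    have hb : ∀ n : ℕ, 1 ≤ n →
        ∫⁻ z : Fin s → ℝ, ENNReal.ofReal ((∑ j, a j * z j) ^ (2 * m))
          ∂(Measure.pi fun _ => gaussianReal 0 v)
        ≤ ENNReal.ofReal ((2 * m).factorial / (n:ℝ) ^ (2 * m) * 2) := by
      intro n hn
      have hn' : (0:ℝ) < n := by exact_mod_cast hn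
      refine (linform_pow_gen s v a m hn').trans ?_
      apply le_of_eq
      congr 1
      rw [← hS, ← hSzero]
      simp
    refine ge_of_tendsto' (x := (Filter.atTop : Filter ℕ))
      (f := fun n : ℕ => ENNReal.ofReal (((2*m).factorial : ℝ) / (((n+1 : ℕ)):ℝ) ^ (2 * m) * 2))
      ?_ (fun n => hb (n+1) (by omega))
    have h1 : Filter.Tendsto (fun n : ℕ => (((n+1 : ℕ)):ℝ) ^ (2 * m)) Filter.atTop Filter.atTop := by
      apply Filter.Tendsto.comp (Filter.tendsto_pow_atTop (by omega : 2 * m ≠ 0))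
      exact tendsto_natCast_atTop_atTop.comp (Filter.tendsto_add_atTop_nat 1)
    have h2 : Filter.Tendsto
        (fun n : ℕ => ((2*m).factorial : ℝ) / (((n+1 : ℕ)):ℝ) ^ (2 * m) * 2)
        Filter.atTop (nhds 0) := by
      have := Filter.Tendsto.div_atTop (tendsto_const_nhds
        (x := ((2*m).factorial : ℝ)) (f := Filter.atTop)) h1
      simpa using this.mul_const 2
    have := (ENNReal.continuous_ofReal.tendsto 0).comp h2
    simpa [Function.comp_def] using this

lemma quad_moment (d s : ℕ) (v : ℝ≥0) (X : Matrix (Fin d) (Fin s) ℝ) (m : ℕ) (hm : 1 ≤ m) :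
    ∫⁻ z : Fin s → ℝ, ENNReal.ofReal ((∑ r, (X.mulVec z r) ^ 2) ^ m)
        ∂(Measure.pi fun _ => gaussianReal 0 v)
      ≤ ENNReal.ofReal 2 *
          (∑ r, ENNReal.ofReal (Real.exp 1 * (m * (v * ∑ j, (X r j) ^ 2)))) ^ m := by
  classical
  set ν := (Measure.pi fun _ : Fin s => gaussianReal 0 v)
  have hWmeas : ∀ r, Measurable fun z : Fin s → ℝ => X.mulVec z r := by
    intro r
    simp only [Matrix.mulVec, dotProduct]
    fun_prop
  set F : Fin d → (Fin s → ℝ) → ℝ≥0∞ := fun r z => ENNReal.ofReal ((X.mulVec z r) ^ 2) with hF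
  have hFmeas : ∀ r, Measurable (F r) := fun r => by fun_prop
  have step1 : ∀ z, ENNReal.ofReal ((∑ r, (X.mulVec z r) ^ 2) ^ m)
      = ∑ g ∈ Fintype.piFinset (fun _ : Fin m => (univ : Finset (Fin d))),
          ∏ i : Fin m, F (g i) z := by
    intro z
    rw [ENNReal.ofReal_pow (by positivity), ENNReal.ofReal_sum_of_nonneg
      (fun r _ => by positivity)]
    calc (∑ r, ENNReal.ofReal ((X.mulVec z r) ^ 2)) ^ m
        = ∏ _i : Fin m, (∑ r, F r z) := by
          rw [Finset.prod_const, Finset.card_univ, Fintype.card_fin]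
      _ = ∑ g ∈ Fintype.piFinset (fun _ : Fin m => (univ : Finset (Fin d))),
            ∏ i : Fin m, F (g i) z := Finset.prod_univ_sum _ _
  simp_rw [step1]
  rw [lintegral_finset_sum _ (fun g _ => Finset.measurable_prod _ fun i _ => hFmeas (g i))]
  -- Hölder for each g
  have step2 : ∀ g : Fin m → Fin d,
      ∫⁻ z, ∏ i : Fin m, F (g i) z ∂ν
        ≤ ∏ i : Fin m, (∫⁻ z, F (g i) z ^ (m : ℕ) ∂ν) ^ ((1 : ℝ)/m) := by
    intro g
    have hmne : (m : ℝ) ≠ 0 := by positivity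
    have h := ENNReal.lintegral_prod_norm_pow_le (μ := ν) Finset.univ
      (f := fun i : Fin m => fun z => F (g i) z ^ (m : ℕ))
      (fun i _ => ((hFmeas (g i)).pow_const m).aemeasurable)
      (p := fun _ => (1 : ℝ)/m)
      (by simp [Finset.card_univ]; field_simp) (fun i _ => by positivity)
    calc ∫⁻ z, ∏ i : Fin m, F (g i) z ∂ν
        = ∫⁻ z, ∏ i : Fin m, (F (g i) z ^ (m:ℕ)) ^ ((1:ℝ)/m) ∂ν := by
          apply lintegral_congr
          intro z
          refine Finset.prod_congr rfl fun i _ => ?_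
          rw [← ENNReal.rpow_natCast (F (g i) z) m, ← ENNReal.rpow_mul]
          rw [mul_one_div, div_self hmne, ENNReal.rpow_one]
      _ ≤ ∏ i : Fin m, (∫⁻ z, F (g i) z ^ (m:ℕ) ∂ν) ^ ((1:ℝ)/m) := h
  -- row moments
  have step3 : ∀ r, ∫⁻ z, F r z ^ (m:ℕ) ∂ν
      ≤ ENNReal.ofReal 2 * ENNReal.ofReal (Real.exp 1 * (m * (v * ∑ j, (X r j) ^ 2))) ^ (m:ℕ) := by
    intro r
    have : ∀ z, F r z ^ (m:ℕ) = ENNReal.ofReal ((∑ j, X r j * z j) ^ (2 * m)) := by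
      intro z
      rw [hF]
      simp only
      rw [← ENNReal.ofReal_pow (by positivity), ← pow_mul]
      rfl
    simp_rw [this]
    refine (linform_moment s v (fun j => X r j) m hm).trans ?_
    rw [ENNReal.ofReal_mul (by norm_num), ENNReal.ofReal_pow (by positivity)]
  calc ∑ g ∈ Fintype.piFinset (fun _ : Fin m => (univ : Finset (Fin d))),
        ∫⁻ z, ∏ i : Fin m, F (g i) z ∂ν
      ≤ ∑ g ∈ Fintype.piFinset (fun _ : Fin m => (univ : Finset (Fin d))),
          ∏ i : Fin m, (ENNReal.ofReal 2 *
            ENNReal.ofReal (Real.exp 1 * (m * (v * ∑ j, (X (g i) j) ^ 2))) ^ (m:ℕ)) ^ ((1:ℝ)/m) := by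
        refine Finset.sum_le_sum fun g _ => (step2 g).trans ?_
        exact Finset.prod_le_prod' fun i _ =>
          ENNReal.rpow_le_rpow (step3 (g i)) (by positivity)
      _ = ENNReal.ofReal 2 *
          (∑ r, ENNReal.ofReal (Real.exp 1 * (m * (v * ∑ j, (X r j) ^ 2)))) ^ m := by
        have hmne : (m : ℝ) ≠ 0 := by positivity
        have hsplit : ∀ r : Fin d, (ENNReal.ofReal 2 *
            ENNReal.ofReal (Real.exp 1 * (m * (v * ∑ j, (X r j) ^ 2))) ^ (m:ℕ)) ^ ((1:ℝ)/m)
            = (ENNReal.ofReal 2) ^ ((1:ℝ)/m)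
              * ENNReal.ofReal (Real.exp 1 * (m * (v * ∑ j, (X r j) ^ 2))) := by
          intro r
          rw [ENNReal.mul_rpow_of_nonneg _ _ (by positivity), ← ENNReal.rpow_natCast _ m,
            ← ENNReal.rpow_mul, mul_one_div, div_self hmne, ENNReal.rpow_one]
        have hconst : ((ENNReal.ofReal 2) ^ ((1:ℝ)/m)) ^ (m : ℕ) = ENNReal.ofReal 2 := by
          rw [← ENNReal.rpow_natCast _ m, ← ENNReal.rpow_mul, one_div,
            inv_mul_cancel₀ hmne, ENNReal.rpow_one]
        calc ∑ g ∈ Fintype.piFinset (fun _ : Fin m => (univ : Finset (Fin d))),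
              ∏ i : Fin m, (ENNReal.ofReal 2 *
                ENNReal.ofReal (Real.exp 1 * (m * (v * ∑ j, (X (g i) j) ^ 2))) ^ (m:ℕ)) ^ ((1:ℝ)/m)
            = ∑ g ∈ Fintype.piFinset (fun _ : Fin m => (univ : Finset (Fin d))),
              (ENNReal.ofReal 2 * ∏ i : Fin m,
                ENNReal.ofReal (Real.exp 1 * (m * (v * ∑ j, (X (g i) j) ^ 2)))) := by
              refine Finset.sum_congr rfl fun g _ => ?_
              rw [Finset.prod_congr rfl fun i (_ : i ∈ univ) => hsplit (g i),
                Finset.prod_mul_distrib, Finset.prod_const, Finset.card_univ,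
                Fintype.card_fin, hconst]
          _ = ENNReal.ofReal 2 *
              (∑ r, ENNReal.ofReal (Real.exp 1 * (m * (v * ∑ j, (X r j) ^ 2)))) ^ m := by
              rw [← Finset.mul_sum]
              congr 1
              refine ((Finset.prod_univ_sum (fun _ : Fin m => (univ : Finset (Fin d)))
                (fun _ r => ENNReal.ofReal (Real.exp 1 * (m * (v * ∑ j, (X r j) ^ 2))))).symm).trans ?_
              rw [Finset.prod_const, Finset.card_univ, Fintype.card_fin]

lemma numeric_bound (m : ℕ) (k : ℝ) (hm2 : 2 ≤ m) (hmk : (m:ℝ) ≤ 2*k) (hkm : 2*k < m+1) :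
    2 * (Real.exp 1 / 4) ^ m ≤ Real.exp (-(1/20) * k) := by
  have hL1 := Real.log_two_gt_d9
  have hL2 := Real.log_two_lt_d9
  have he4 : (Real.exp 1 / 4 : ℝ) = Real.exp (1 - 2 * Real.log 2) := by
    rw [Real.exp_sub]
    congr 1
    rw [show (2 : ℝ) * Real.log 2 = Real.log 2 + Real.log 2 by ring, Real.exp_add,
      Real.exp_log (by norm_num : (0:ℝ) < 2)]
    norm_num
  rw [he4, ← Real.exp_nat_mul]
  have h2e : (2:ℝ) * Real.exp (m * (1 - 2 * Real.log 2))
      = Real.exp (Real.log 2 + m * (1 - 2 * Real.log 2)) := by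
    rw [Real.exp_add, Real.exp_log (by norm_num : (0:ℝ) < 2)]
  rw [h2e, Real.exp_le_exp]
  have hm2' : (2:ℝ) ≤ (m:ℝ) := by exact_mod_cast hm2
  nlinarith [hL1, hL2, hm2', hkm]

lemma quad_tail (d s : ℕ) (hs : 0 < s) (X : Matrix (Fin d) (Fin s) ℝ)
    (hX : ∀ j, ∑ r, (X r j) ^ 2 ≤ 1) (v : ℝ≥0) (σ2 : ℝ) (hv : (v:ℝ) ≤ σ2)
    (k : ℝ) (hk : 1 ≤ k) :
    (Measure.pi fun _ : Fin s => gaussianReal 0 v)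
      {z | 8 * k * s * σ2 < ∑ r, (X.mulVec z r) ^ 2}
      ≤ ENNReal.ofReal (Real.exp (-(1/20) * k)) := by
  classical
  set ν := (Measure.pi fun _ : Fin s => gaussianReal 0 v)
  set Q : (Fin s → ℝ) → ℝ := fun z => ∑ r, (X.mulVec z r) ^ 2 with hQ
  have hQmeas : Measurable Q := by
    apply Finset.measurable_sum
    intro r _
    have : Measurable fun z : Fin s → ℝ => X.mulVec z r := by
      simp only [Matrix.mulVec, dotProduct]
      fun_prop
    fun_prop
  have hQnonneg : ∀ z, 0 ≤ Q z := fun z => Finset.sum_nonneg fun r _ => sq_nonneg _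
  set m : ℕ := ⌊2 * k⌋₊ with hm
  have hm2 : 2 ≤ m := Nat.le_floor (by push_cast; linarith)
  have hm1 : 1 ≤ m := by omega
  have hmk : (m : ℝ) ≤ 2 * k := Nat.floor_le (by linarith)
  have hkm : 2 * k < m + 1 := Nat.lt_floor_add_one _
  -- trace bound
  have hT : (v : ℝ) * ∑ r, ∑ j, (X r j) ^ 2 ≤ σ2 * s := by
    have h1 : ∑ r, ∑ j, (X r j) ^ 2 ≤ (s : ℝ) := by
      rw [Finset.sum_comm]
      calc ∑ j : Fin s, ∑ r, (X r j) ^ 2 ≤ ∑ _j : Fin s, (1:ℝ) :=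
            Finset.sum_le_sum fun j _ => hX j
        _ = s := by simp
    have hv0 : (0:ℝ) ≤ v := v.coe_nonneg
    have hs2 : (0:ℝ) ≤ σ2 := le_trans hv0 hv
    calc (v:ℝ) * ∑ r, ∑ j, (X r j) ^ 2 ≤ σ2 * ∑ r, ∑ j, (X r j) ^ 2 := by
          apply mul_le_mul_of_nonneg_right hv
          positivity
      _ ≤ σ2 * s := mul_le_mul_of_nonneg_left h1 hs2
  -- the moment bound in convenient form
  have hmom : ∫⁻ z, ENNReal.ofReal (Q z ^ m) ∂ν
      ≤ ENNReal.ofReal (2 * (Real.exp 1 * (m * (σ2 * s))) ^ m) := by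
    refine (quad_moment d s v X m hm1).trans ?_
    have h1 : ∑ r, ENNReal.ofReal (Real.exp 1 * (m * (v * ∑ j, (X r j) ^ 2)))
        = ENNReal.ofReal (Real.exp 1 * (m * (v * ∑ r, ∑ j, (X r j) ^ 2))) := by
      rw [← ENNReal.ofReal_sum_of_nonneg (fun r _ => by positivity)]
      congr 1
      rw [Finset.mul_sum, Finset.mul_sum, Finset.mul_sum]
    rw [h1, ← ENNReal.ofReal_pow (by positivity), ← ENNReal.ofReal_mul (by norm_num)]
    refine ENNReal.ofReal_le_ofReal ?_
    have hAB : Real.exp 1 * ((m:ℝ) * ((v:ℝ) * ∑ r, ∑ j, (X r j) ^ 2))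
        ≤ Real.exp 1 * ((m:ℝ) * (σ2 * s)) := by
      refine mul_le_mul_of_nonneg_left ?_ (Real.exp_pos 1).le
      exact mul_le_mul_of_nonneg_left hT (by positivity)
    have h0 : (0:ℝ) ≤ Real.exp 1 * ((m:ℝ) * ((v:ℝ) * ∑ r, ∑ j, (X r j) ^ 2)) := by positivity
    exact mul_le_mul_of_nonneg_left (pow_le_pow_left₀ h0 hAB m) (by norm_num)
  rcases le_or_gt σ2 0 with hσ0 | hσpos
  · -- σ2 = 0 case
    have hσ2 : σ2 = 0 := le_antisymm hσ0 (le_trans v.coe_nonneg hv)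
    have hv0 : (v : ℝ) = 0 := le_antisymm (hσ2 ▸ hv) v.coe_nonneg
    have hzero : ∫⁻ z, ENNReal.ofReal (Q z ^ m) ∂ν = 0 := by
      refine le_antisymm (hmom.trans ?_) zero_le
      rw [hσ2]
      simp [zero_pow (by omega : m ≠ 0)]
    have hae : ∀ᵐ z ∂ν, ENNReal.ofReal (Q z ^ m) = 0 :=
      (lintegral_eq_zero_iff (by fun_prop)).mp hzero
    have hsub : {z | 8 * k * s * σ2 < Q z} ⊆ {z | ¬ (ENNReal.ofReal (Q z ^ m) = 0)} := by
      intro z hz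
      simp only [Set.mem_setOf_eq] at *
      rw [hσ2] at hz
      have hQpos : 0 < Q z := by linarith [hz]
      simp only [ENNReal.ofReal_eq_zero, not_le]
      positivity
    have hnull : ν {z | 8 * k * s * σ2 < Q z} = 0 := measure_mono_null hsub (ae_iff.mp hae)
    show ν {z | 8 * k * s * σ2 < Q z} ≤ _
    rw [hnull]
    exact zero_le
  · -- σ2 > 0
    set τ : ℝ := 8 * k * s * σ2 with hτ
    have hτpos : 0 < τ := by
      have : (0:ℝ) < s := by exact_mod_cast hs
      positivity
    have hτm : (0:ℝ) < τ ^ m := by positivity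
    have hincl : {z | τ < Q z} ⊆ {z | ENNReal.ofReal (τ ^ m) ≤ ENNReal.ofReal (Q z ^ m)} := by
      intro z hz
      simp only [Set.mem_setOf_eq] at *
      exact ENNReal.ofReal_le_ofReal (pow_le_pow_left₀ hτpos.le hz.le m)
    have hmarkov := mul_meas_ge_le_lintegral₀ (μ := ν)
      (f := fun z => ENNReal.ofReal (Q z ^ m)) (by fun_prop) (ENNReal.ofReal (τ ^ m))
    have hmeasle : ν {z | τ < Q z} ≤ ν {z | ENNReal.ofReal (τ ^ m) ≤ ENNReal.ofReal (Q z ^ m)} :=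
      measure_mono hincl
    have hdivle : ν {z | τ < Q z}
        ≤ ENNReal.ofReal (2 * (Real.exp 1 * (m * (σ2 * s))) ^ m) / ENNReal.ofReal (τ ^ m) := by
      rw [ENNReal.le_div_iff_mul_le (Or.inl (by simp [ENNReal.ofReal_eq_zero]; positivity))
        (Or.inl ENNReal.ofReal_ne_top)]
      calc ν {z | τ < Q z} * ENNReal.ofReal (τ ^ m)
          ≤ ν {z | ENNReal.ofReal (τ ^ m) ≤ ENNReal.ofReal (Q z ^ m)} * ENNReal.ofReal (τ ^ m) :=
            mul_le_mul_left hmeasle _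
        _ = ENNReal.ofReal (τ ^ m) * ν {z | ENNReal.ofReal (τ ^ m) ≤ ENNReal.ofReal (Q z ^ m)} :=
            mul_comm _ _
        _ ≤ ∫⁻ z, ENNReal.ofReal (Q z ^ m) ∂ν := hmarkov
        _ ≤ ENNReal.ofReal (2 * (Real.exp 1 * (m * (σ2 * s))) ^ m) := hmom
    refine hdivle.trans ?_
    rw [← ENNReal.ofReal_div_of_pos hτm]
    refine ENNReal.ofReal_le_ofReal ?_
    have hss : (0:ℝ) < s := by exact_mod_cast hs
    have hfrac : Real.exp 1 * (m * (σ2 * s)) / τ = Real.exp 1 * m / (8 * k) := by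
      rw [hτ]
      field_simp
    calc 2 * (Real.exp 1 * (m * (σ2 * s))) ^ m / τ ^ m
        = 2 * (Real.exp 1 * (m * (σ2 * s)) / τ) ^ m := by rw [mul_div_assoc, ← div_pow]
      _ = 2 * (Real.exp 1 * m / (8 * k)) ^ m := by rw [hfrac]
      _ ≤ 2 * (Real.exp 1 / 4) ^ m := by
          refine mul_le_mul_of_nonneg_left ?_ (by norm_num)
          refine pow_le_pow_left₀ (by positivity) ?_ m
          rw [div_le_div_iff₀ (by positivity) (by norm_num : (0:ℝ) < 4)]
          nlinarith [Real.exp_pos 1, hmk, hk]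
      _ ≤ Real.exp (-(1/20) * k) := numeric_bound m k hm2 hmk hkm

/-- Gaussian-noise gradient error bound: there is an absolute constant `c > 0` such that
for Gaussian masking noise `Z^A_t ~ N(0, σ_A² I_s)`, `Z^B_t ~ N(0, σ_B² I_s)` and matrices
whose columns have Euclidean norm at most 1, with probability at least `1 - 2T e^{-ck}`
the gradient errors satisfy `‖e_t‖₂ ≤ √(k/s)·σ` simultaneously for all `t`. -/
theorem stmt10 :
    ∃ c : ℝ, 0 < c ∧
      ∀ (T dA dB s : ℕ), 0 < s →
      ∀ (XA : Fin T → Matrix (Fin dA) (Fin s) ℝ)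
        (XB : Fin T → Matrix (Fin dB) (Fin s) ℝ),
        (∀ t j, Real.sqrt (∑ r, (XA t r j) ^ 2) ≤ 1) →
        (∀ t j, Real.sqrt (∑ r, (XB t r j) ^ 2) ≤ 1) →
      ∀ (σA σB : ℝ≥0) (Ω : Type) (_ : MeasurableSpace Ω) (P : Measure Ω),
        IsProbabilityMeasure P →
      ∀ ZA ZB : Fin T → Ω → Fin s → ℝ,
        (∀ t, Measurable (ZA t)) → (∀ t, Measurable (ZB t)) →
        (∀ t, P.map (ZA t) =
          Measure.pi fun _ : Fin s => ProbabilityTheory.gaussianReal 0 (σA ^ 2)) →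
        (∀ t, P.map (ZB t) =
          Measure.pi fun _ : Fin s => ProbabilityTheory.gaussianReal 0 (σB ^ 2)) →
      ∀ k : ℝ, 1 ≤ k →
        ENNReal.ofReal (1 - 2 * T * Real.exp (-c * k)) ≤
          P {ω | ∀ t : Fin T,
            Real.sqrt ((∑ r, ((1 / (4 * s)) * (XA t).mulVec (ZB t ω) r) ^ 2) +
                       (∑ r, ((1 / (4 * s)) * (XB t).mulVec (ZA t ω) r) ^ 2))
              ≤ Real.sqrt (k / s) * max (σA : ℝ) (σB : ℝ)} := by
  refine ⟨1/20, by norm_num, ?_⟩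
  intro T dA dB s hs XA XB hXA hXB σA σB Ω mΩ P hP ZA ZB hZAm hZBm hZA hZB k hk
  have hs' : (0:ℝ) < s := by exact_mod_cast hs
  set σm : ℝ := max (σA : ℝ) (σB : ℝ) with hσm
  have hσm0 : 0 ≤ σm := le_trans σA.coe_nonneg (le_max_left _ _)
  set σ2 : ℝ := σm ^ 2 with hσ2
  set τ : ℝ := 8 * k * s * σ2 with hτ
  -- column norm bounds without sqrt
  have hXA' : ∀ t j, ∑ r, (XA t r j) ^ 2 ≤ 1 := by
    intro t j
    have h := hXA t j
    have hnn : (0:ℝ) ≤ ∑ r, (XA t r j) ^ 2 := by positivity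
    nlinarith [Real.sq_sqrt hnn, Real.sqrt_nonneg (∑ r, (XA t r j) ^ 2)]
  have hXB' : ∀ t j, ∑ r, (XB t r j) ^ 2 ≤ 1 := by
    intro t j
    have h := hXB t j
    have hnn : (0:ℝ) ≤ ∑ r, (XB t r j) ^ 2 := by positivity
    nlinarith [Real.sq_sqrt hnn, Real.sqrt_nonneg (∑ r, (XB t r j) ^ 2)]
  -- measurability of coordinate processes
  have hWB : ∀ t (r : Fin dA), Measurable fun ω => (XA t).mulVec (ZB t ω) r := by
    intro t r
    simp only [Matrix.mulVec, dotProduct]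
    apply Finset.measurable_sum
    intro j _
    exact (measurable_const.mul ((measurable_pi_apply j).comp (hZBm t)))
  have hWA : ∀ t (r : Fin dB), Measurable fun ω => (XB t).mulVec (ZA t ω) r := by
    intro t r
    simp only [Matrix.mulVec, dotProduct]
    apply Finset.measurable_sum
    intro j _
    exact (measurable_const.mul ((measurable_pi_apply j).comp (hZAm t)))
  -- the bad events
  set BadB : Fin T → Set Ω := fun t => {ω | τ < ∑ r, ((XA t).mulVec (ZB t ω) r) ^ 2} with hBadB
  set BadA : Fin T → Set Ω := fun t => {ω | τ < ∑ r, ((XB t).mulVec (ZA t ω) r) ^ 2} with hBadA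
  have hBadBmeas : ∀ t, MeasurableSet (BadB t) := by
    intro t
    exact measurableSet_lt measurable_const (Finset.measurable_sum _ fun r _ => (hWB t r).pow_const 2)
  have hBadAmeas : ∀ t, MeasurableSet (BadA t) := by
    intro t
    exact measurableSet_lt measurable_const (Finset.measurable_sum _ fun r _ => (hWA t r).pow_const 2)
  -- tail bounds for bad events
  have hPBadB : ∀ t, P (BadB t) ≤ ENNReal.ofReal (Real.exp (-(1/20) * k)) := by
    intro t
    have hsetm : MeasurableSet {z : Fin s → ℝ | τ < ∑ r, ((XA t).mulVec z r) ^ 2} := by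
      refine measurableSet_lt measurable_const (Finset.measurable_sum _ fun r _ => ?_)
      have : Measurable fun z : Fin s → ℝ => (XA t).mulVec z r := by
        simp only [Matrix.mulVec, dotProduct]
        fun_prop
      fun_prop
    have hpre : BadB t = (ZB t) ⁻¹' {z | τ < ∑ r, ((XA t).mulVec z r) ^ 2} := rfl
    rw [hpre, ← Measure.map_apply (hZBm t) hsetm, hZB t, hτ]
    refine quad_tail dA s hs (XA t) (hXA' t) (σB ^ 2) σ2 ?_ k hk
    push_cast
    exact pow_le_pow_left₀ σB.coe_nonneg (le_max_right _ _) 2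
  have hPBadA : ∀ t, P (BadA t) ≤ ENNReal.ofReal (Real.exp (-(1/20) * k)) := by
    intro t
    have hsetm : MeasurableSet {z : Fin s → ℝ | τ < ∑ r, ((XB t).mulVec z r) ^ 2} := by
      refine measurableSet_lt measurable_const (Finset.measurable_sum _ fun r _ => ?_)
      have : Measurable fun z : Fin s → ℝ => (XB t).mulVec z r := by
        simp only [Matrix.mulVec, dotProduct]
        fun_prop
      fun_prop
    have hpre : BadA t = (ZA t) ⁻¹' {z | τ < ∑ r, ((XB t).mulVec z r) ^ 2} := rfl
    rw [hpre, ← Measure.map_apply (hZAm t) hsetm, hZA t, hτ]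
    refine quad_tail dB s hs (XB t) (hXB' t) (σA ^ 2) σ2 ?_ k hk
    push_cast
    exact pow_le_pow_left₀ σA.coe_nonneg (le_max_left _ _) 2
  -- the good event
  set G : Set Ω := {ω | ∀ t : Fin T,
      Real.sqrt ((∑ r, ((1 / (4 * s)) * (XA t).mulVec (ZB t ω) r) ^ 2) +
                 (∑ r, ((1 / (4 * s)) * (XB t).mulVec (ZA t ω) r) ^ 2))
        ≤ Real.sqrt (k / s) * σm} with hG
  have hGmeas : MeasurableSet G := by
    have : G = ⋂ t : Fin T, {ω | Real.sqrt
        ((∑ r, ((1 / (4 * s)) * (XA t).mulVec (ZB t ω) r) ^ 2) +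
         (∑ r, ((1 / (4 * s)) * (XB t).mulVec (ZA t ω) r) ^ 2)) ≤ Real.sqrt (k / s) * σm} := by
      ext ω; simp [hG, Set.mem_iInter]
    rw [this]
    refine MeasurableSet.iInter fun t => ?_
    refine measurableSet_le ?_ measurable_const
    apply Measurable.comp Real.continuous_sqrt.measurable
    exact ((Finset.measurable_sum _ fun r _ => (measurable_const.mul (hWB t r)).pow_const 2).add
      (Finset.measurable_sum _ fun r _ => (measurable_const.mul (hWA t r)).pow_const 2))
  -- inclusion of complement in union of bad events
  have hsub : Gᶜ ⊆ ⋃ t, (BadA t ∪ BadB t) := by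
    intro ω hω
    by_contra hnot
    apply hω
    simp only [Set.mem_iUnion, Set.mem_union, not_exists, not_or, hBadA, hBadB,
      Set.mem_setOf_eq, not_lt] at hnot
    intro t
    obtain ⟨hA, hB⟩ := hnot t
    have e1 : ∑ r, ((1 / (4 * (s:ℝ))) * (XA t).mulVec (ZB t ω) r) ^ 2
        = (1 / (4 * (s:ℝ))) ^ 2 * ∑ r, ((XA t).mulVec (ZB t ω) r) ^ 2 := by
      rw [Finset.mul_sum]
      exact Finset.sum_congr rfl fun r _ => mul_pow _ _ 2
    have e2 : ∑ r, ((1 / (4 * (s:ℝ))) * (XB t).mulVec (ZA t ω) r) ^ 2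
        = (1 / (4 * (s:ℝ))) ^ 2 * ∑ r, ((XB t).mulVec (ZA t ω) r) ^ 2 := by
      rw [Finset.mul_sum]
      exact Finset.sum_congr rfl fun r _ => mul_pow _ _ 2
    have harg : (∑ r, ((1 / (4 * (s:ℝ))) * (XA t).mulVec (ZB t ω) r) ^ 2) +
        (∑ r, ((1 / (4 * (s:ℝ))) * (XB t).mulVec (ZA t ω) r) ^ 2) ≤ (k / s) * σ2 := by
      rw [e1, e2]
      have hkey : (1 / (4 * (s:ℝ))) ^ 2 * (τ + τ) = (k / s) * σ2 := by
        rw [hτ]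
        field_simp
        ring
      have hc2 : (0:ℝ) ≤ (1 / (4 * (s:ℝ))) ^ 2 := by positivity
      nlinarith [mul_le_mul_of_nonneg_left hB hc2, mul_le_mul_of_nonneg_left hA hc2]
    calc Real.sqrt ((∑ r, ((1 / (4 * (s:ℝ))) * (XA t).mulVec (ZB t ω) r) ^ 2) +
          (∑ r, ((1 / (4 * (s:ℝ))) * (XB t).mulVec (ZA t ω) r) ^ 2))
        ≤ Real.sqrt ((k / s) * σ2) := Real.sqrt_le_sqrt harg
      _ = Real.sqrt (k / s) * σm := by
          rw [hσ2, Real.sqrt_mul (by positivity), Real.sqrt_sq hσm0]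
  -- union bound
  have hunion : P Gᶜ ≤ ENNReal.ofReal (2 * T * Real.exp (-(1/20) * k)) := by
    set E : ℝ≥0∞ := ENNReal.ofReal (Real.exp (-(1/20) * k)) with hE
    calc P Gᶜ ≤ P (⋃ t, (BadA t ∪ BadB t)) := measure_mono hsub
      _ ≤ ∑ t : Fin T, P (BadA t ∪ BadB t) := measure_iUnion_fintype_le _ _
      _ ≤ ∑ t : Fin T, (E + E) := by
          refine Finset.sum_le_sum fun t _ => ?_
          exact le_trans (measure_union_le _ _) (add_le_add (hPBadA t) (hPBadB t))
      _ = (T : ℝ≥0∞) * (E + E) := by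
          rw [Finset.sum_const, Finset.card_univ, Fintype.card_fin, nsmul_eq_mul]
      _ = ENNReal.ofReal (2 * T * Real.exp (-(1/20) * k)) := by
          rw [hE, ← ENNReal.ofReal_add (Real.exp_pos _).le (Real.exp_pos _).le]
          rw [← ENNReal.ofReal_natCast T, ← ENNReal.ofReal_mul (Nat.cast_nonneg T)]
          congr 1
          ring
  -- conclude
  have hcompl : P G = 1 - P Gᶜ := by
    have h := prob_compl_eq_one_sub (μ := P) hGmeas.compl
    rw [compl_compl] at h
    exact h
  rw [hcompl]
  have hD : ENNReal.ofReal (1 - 2 * T * Real.exp (-(1/20) * k))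
      = 1 - ENNReal.ofReal (2 * T * Real.exp (-(1/20) * k)) := by
    rw [ENNReal.ofReal_sub _ (by positivity), ENNReal.ofReal_one]
  rw [hD]
  exact tsub_le_tsub_left hunion 1
end

section
/- Fix G > 1/2 and suppose ‖θ‖₂ ≤ 4G − 2, ‖θ'‖₂ ≤ 4G − 2, ‖x_i‖₂ ≤ 1 for all i, and y_i ∈ {−1,1}. For a batch B of size s, with each feature split as x_i = (x^A_i, x^B_i) and θ = (θ^A, θ^B), define the sensitive vectors SV^A(θ, B) := ((θ^A)ᵀx^A_i − 2y_i)_{i∈B} ∈ ℝ^s and SV^B(θ, B) := ((θ^B)ᵀx^B_i)_{i∈B} ∈ ℝ^s. Then: (i) if B = B', ‖SV^A(θ,B) − SV^A(θ',B')‖₂ ≤ √s·‖θ − θ'‖₂ and likewise for SV^B; (ii) if B and B' differ in exactly one index, ‖SV^A(θ,B) − SV^A(θ',B')‖₂ ≤ √(s‖θ − θ'‖₂² + (8G)²) and ‖SV^B(θ,B) − SV^B(θ',B')‖₂ ≤ √(s‖θ − θ'‖₂² + (8G−4)²). -/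
open Finset
open scoped RealInnerProductSpace

/-- Sensitivity bounds for the sensitive vectors `SV^A` and `SV^B`: on identical batches
they differ by at most `√s·‖θ - θ'‖₂`; on batches differing in exactly one index they
differ by at most `√(s‖θ - θ'‖₂² + (8G)²)` resp. `√(s‖θ - θ'‖₂² + (8G-4)²)`. -/
theorem stmt15 (dA dB n s : ℕ) (hs : 0 < s) (G : ℝ) (hG : 1 / 2 < G)
    (xA : Fin n → EuclideanSpace ℝ (Fin dA)) (xB : Fin n → EuclideanSpace ℝ (Fin dB))
    (y : Fin n → ℝ) (hy : ∀ i, y i = 1 ∨ y i = -1)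
    (hx : ∀ i, Real.sqrt (‖xA i‖ ^ 2 + ‖xB i‖ ^ 2) ≤ 1)
    (θA θA' : EuclideanSpace ℝ (Fin dA)) (θB θB' : EuclideanSpace ℝ (Fin dB))
    (hθ : Real.sqrt (‖θA‖ ^ 2 + ‖θB‖ ^ 2) ≤ 4 * G - 2)
    (hθ' : Real.sqrt (‖θA'‖ ^ 2 + ‖θB'‖ ^ 2) ≤ 4 * G - 2) :
    (∀ B : Finset (Fin n), B.card = s →
      Real.sqrt (∑ i ∈ B, ((⟪θA, xA i⟫ - 2 * y i) - (⟪θA', xA i⟫ - 2 * y i)) ^ 2) ≤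
        Real.sqrt s * Real.sqrt (‖θA - θA'‖ ^ 2 + ‖θB - θB'‖ ^ 2) ∧
      Real.sqrt (∑ i ∈ B, (⟪θB, xB i⟫ - ⟪θB', xB i⟫) ^ 2) ≤
        Real.sqrt s * Real.sqrt (‖θA - θA'‖ ^ 2 + ‖θB - θB'‖ ^ 2)) ∧
    (∀ (I : Finset (Fin n)) (p q : Fin n), p ∉ I → q ∉ I → p ≠ q →
      (insert p I).card = s →
      Real.sqrt ((∑ i ∈ I, ((⟪θA, xA i⟫ - 2 * y i) - (⟪θA', xA i⟫ - 2 * y i)) ^ 2) +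
          ((⟪θA, xA p⟫ - 2 * y p) - (⟪θA', xA q⟫ - 2 * y q)) ^ 2) ≤
        Real.sqrt (s * (‖θA - θA'‖ ^ 2 + ‖θB - θB'‖ ^ 2) + (8 * G) ^ 2) ∧
      Real.sqrt ((∑ i ∈ I, (⟪θB, xB i⟫ - ⟪θB', xB i⟫) ^ 2) +
          (⟪θB, xB p⟫ - ⟪θB', xB q⟫) ^ 2) ≤
        Real.sqrt (s * (‖θA - θA'‖ ^ 2 + ‖θB - θB'‖ ^ 2) + (8 * G - 4) ^ 2)) := by
  set M : ℝ := ‖θA - θA'‖ ^ 2 + ‖θB - θB'‖ ^ 2 with hMdef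
  have hM : 0 ≤ M := by positivity
  -- norms of parts are bounded by the full norm
  have normA : ∀ (v : EuclideanSpace ℝ (Fin dA)) (w : EuclideanSpace ℝ (Fin dB)) (c : ℝ),
      Real.sqrt (‖v‖ ^ 2 + ‖w‖ ^ 2) ≤ c → ‖v‖ ≤ c := by
    intro v w c h
    calc ‖v‖ = Real.sqrt (‖v‖ ^ 2) := (Real.sqrt_sq (norm_nonneg _)).symm
      _ ≤ Real.sqrt (‖v‖ ^ 2 + ‖w‖ ^ 2) :=
          Real.sqrt_le_sqrt (le_add_of_nonneg_right (by positivity))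
      _ ≤ c := h
  have normB : ∀ (v : EuclideanSpace ℝ (Fin dA)) (w : EuclideanSpace ℝ (Fin dB)) (c : ℝ),
      Real.sqrt (‖v‖ ^ 2 + ‖w‖ ^ 2) ≤ c → ‖w‖ ≤ c := by
    intro v w c h
    calc ‖w‖ = Real.sqrt (‖w‖ ^ 2) := (Real.sqrt_sq (norm_nonneg _)).symm
      _ ≤ Real.sqrt (‖v‖ ^ 2 + ‖w‖ ^ 2) :=
          Real.sqrt_le_sqrt (le_add_of_nonneg_left (by positivity))
      _ ≤ c := h
  have hxA : ∀ i, ‖xA i‖ ≤ 1 := fun i => normA _ _ _ (hx i)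
  have hxB : ∀ i, ‖xB i‖ ≤ 1 := fun i => normB _ _ _ (hx i)
  have hA : ‖θA‖ ≤ 4 * G - 2 := normA _ _ _ hθ
  have hB : ‖θB‖ ≤ 4 * G - 2 := normB _ _ _ hθ
  have hA' : ‖θA'‖ ≤ 4 * G - 2 := normA _ _ _ hθ'
  have hB' : ‖θB'‖ ≤ 4 * G - 2 := normB _ _ _ hθ'
  -- per-term bounds on identical indices
  have termA : ∀ i, ((⟪θA, xA i⟫ - 2 * y i) - (⟪θA', xA i⟫ - 2 * y i)) ^ 2 ≤ M := by
    intro i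
    have e : (⟪θA, xA i⟫ - 2 * y i) - (⟪θA', xA i⟫ - 2 * y i)
        = ⟪θA - θA', xA i⟫ := by rw [inner_sub_left]; ring
    rw [e]
    have h1 : |⟪θA - θA', xA i⟫| ≤ ‖θA - θA'‖ * ‖xA i‖ := abs_real_inner_le_norm _ _
    have h2 : |⟪θA - θA', xA i⟫| ≤ ‖θA - θA'‖ :=
      h1.trans (mul_le_of_le_one_right (norm_nonneg _) (hxA i))
    calc (⟪θA - θA', xA i⟫ : ℝ) ^ 2 = |⟪θA - θA', xA i⟫| ^ 2 := (sq_abs _).symm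
      _ ≤ ‖θA - θA'‖ ^ 2 := pow_le_pow_left₀ (abs_nonneg _) h2 2
      _ ≤ M := le_add_of_nonneg_right (by positivity)
  have termB : ∀ i, (⟪θB, xB i⟫ - ⟪θB', xB i⟫) ^ 2 ≤ M := by
    intro i
    have e : (⟪θB, xB i⟫ - ⟪θB', xB i⟫ : ℝ) = ⟪θB - θB', xB i⟫ := by
      rw [inner_sub_left]
    rw [e]
    have h1 : |⟪θB - θB', xB i⟫| ≤ ‖θB - θB'‖ * ‖xB i‖ := abs_real_inner_le_norm _ _
    have h2 : |⟪θB - θB', xB i⟫| ≤ ‖θB - θB'‖ :=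
      h1.trans (mul_le_of_le_one_right (norm_nonneg _) (hxB i))
    calc (⟪θB - θB', xB i⟫ : ℝ) ^ 2 = |⟪θB - θB', xB i⟫| ^ 2 := (sq_abs _).symm
      _ ≤ ‖θB - θB'‖ ^ 2 := pow_le_pow_left₀ (abs_nonneg _) h2 2
      _ ≤ M := le_add_of_nonneg_left (by positivity)
  have sumA : ∀ (B : Finset (Fin n)),
      (∑ i ∈ B, ((⟪θA, xA i⟫ - 2 * y i) - (⟪θA', xA i⟫ - 2 * y i)) ^ 2) ≤ B.card * M := by
    intro B
    calc (∑ i ∈ B, ((⟪θA, xA i⟫ - 2 * y i) - (⟪θA', xA i⟫ - 2 * y i)) ^ 2)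
        ≤ B.card • M := Finset.sum_le_card_nsmul B _ M (fun i _ => termA i)
      _ = B.card * M := nsmul_eq_mul _ _
  have sumB : ∀ (B : Finset (Fin n)),
      (∑ i ∈ B, (⟪θB, xB i⟫ - ⟪θB', xB i⟫) ^ 2) ≤ B.card * M := by
    intro B
    calc (∑ i ∈ B, (⟪θB, xB i⟫ - ⟪θB', xB i⟫) ^ 2)
        ≤ B.card • M := Finset.sum_le_card_nsmul B _ M (fun i _ => termB i)
      _ = B.card * M := nsmul_eq_mul _ _
  constructor
  · intro B hB
    have hsm : Real.sqrt ((s : ℝ) * M) = Real.sqrt s * Real.sqrt M :=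
      Real.sqrt_mul (Nat.cast_nonneg s) M
    constructor
    · rw [← hsm]
      apply Real.sqrt_le_sqrt
      simpa [hB] using sumA B
    · rw [← hsm]
      apply Real.sqrt_le_sqrt
      simpa [hB] using sumB B
  · intro I p q hp hq hpq hcard
    have hIcard : (I.card : ℝ) ≤ s := by
      have : I.card ≤ (insert p I).card := Finset.card_le_card (Finset.subset_insert p I)
      exact_mod_cast this.trans hcard.le
    have hIM : (I.card : ℝ) * M ≤ s * M := mul_le_mul_of_nonneg_right hIcard hM
    -- bounds on inner products
    have iA : ∀ (v : EuclideanSpace ℝ (Fin dA)) (i : Fin n), ‖v‖ ≤ 4 * G - 2 →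
        |⟪v, xA i⟫| ≤ 4 * G - 2 := by
      intro v i hv
      have h1 : |⟪v, xA i⟫| ≤ ‖v‖ * ‖xA i‖ := abs_real_inner_le_norm _ _
      exact h1.trans ((mul_le_of_le_one_right (norm_nonneg _) (hxA i)).trans hv)
    have iB : ∀ (v : EuclideanSpace ℝ (Fin dB)) (i : Fin n), ‖v‖ ≤ 4 * G - 2 →
        |⟪v, xB i⟫| ≤ 4 * G - 2 := by
      intro v i hv
      have h1 : |⟪v, xB i⟫| ≤ ‖v‖ * ‖xB i‖ := abs_real_inner_le_norm _ _
      exact h1.trans ((mul_le_of_le_one_right (norm_nonneg _) (hxB i)).trans hv)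
    have hyp : |y p| = 1 := by rcases hy p with h | h <;> simp [h]
    have hyq : |y q| = 1 := by rcases hy q with h | h <;> simp [h]
    constructor
    · apply Real.sqrt_le_sqrt
      have hterm : ((⟪θA, xA p⟫ - 2 * y p) - (⟪θA', xA q⟫ - 2 * y q)) ^ 2 ≤ (8 * G) ^ 2 := by
        have h3 := abs_le.mp (iA θA p hA)
        have h4 := abs_le.mp (iA θA' q hA')
        have h5 := abs_le.mp hyp.le
        have h6 := abs_le.mp hyq.le
        apply sq_le_sq'
        · linarith [h3.1, h4.2, h5.2, h6.1]
        · linarith [h3.2, h4.1, h5.1, h6.2]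
      have := sumA I
      linarith
    · apply Real.sqrt_le_sqrt
      have hterm : (⟪θB, xB p⟫ - ⟪θB', xB q⟫) ^ 2 ≤ (8 * G - 4) ^ 2 := by
        have h3 := abs_le.mp (iB θB p hB)
        have h4 := abs_le.mp (iB θB' q hB')
        apply sq_le_sq'
        · linarith [h3.1, h4.2]
        · linarith [h3.2, h4.1]
      have := sumB I
      linarith
end

section
/- Fix G > 1/2, 0 < η ≤ 1, and let two runs of mini-batch gradient descent on the Taylor-approximated logistic loss be performed on two datasets differing in at most one instance, with n = ms samples per epoch, batches of size s, e epochs, T = me total iterations, ‖x_i‖₂ ≤ 1, y_i ∈ {−1,1}, identical initialization, the same batch index sets (so in each epoch at most one batch pair differs, in exactly one index), per-sample gradients bounded in norm by G along both trajectories, and ‖θ_{t−1}‖₂ ≤ 4G − 2 along both trajectories. Then the concatenations over t ∈ {1,...,T} of the sensitive vectors satisfy ‖(SV^A_t)_{t∈[T]} − ((SV^A_t)')_{t∈[T]}‖₂ ≤ √(8G²e²Tη²/s + 64G²e) and ‖(SV^B_t)_{t∈[T]} − ((SV^B_t)')_{t∈[T]}‖₂ ≤ √(8G²e²Tη²/s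 + (8G−4)²e). -/
open Finset
open scoped RealInnerProductSpace

lemma nonexp {E : Type*} [NormedAddCommGroup E] [InnerProductSpace ℝ E]
    {ι : Type*} (B : Finset ι) (x : ι → E) (hx : ∀ i ∈ B, ‖x i‖ ≤ 1)
    {c : ℝ} (hc : 0 ≤ c) (hcard : c * B.card ≤ 2) (v : E) :
    ‖v - c • ∑ i ∈ B, ⟪v, x i⟫ • x i‖ ≤ ‖v‖ := by
  have hsq : ‖v - c • ∑ i ∈ B, ⟪v, x i⟫ • x i‖ ^ 2 ≤ ‖v‖ ^ 2 := by
    rw [norm_sub_sq_real]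
    have hip : ⟪v, c • ∑ i ∈ B, ⟪v, x i⟫ • x i⟫ = c * ∑ i ∈ B, ⟪v, x i⟫ ^ 2 := by
      rw [real_inner_smul_right, inner_sum]
      congr 1
      refine Finset.sum_congr rfl fun i _ => ?_
      rw [real_inner_smul_right]; ring
    rw [hip]
    have hnorm : ‖c • ∑ i ∈ B, ⟪v, x i⟫ • x i‖ ^ 2 ≤ c ^ 2 * (B.card * ∑ i ∈ B, ⟪v, x i⟫ ^ 2) := by
      rw [norm_smul]
      have h1 : ‖∑ i ∈ B, ⟪v, x i⟫ • x i‖ ≤ ∑ i ∈ B, |⟪v, x i⟫| := by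
        refine (norm_sum_le _ _).trans (Finset.sum_le_sum fun i hi => ?_)
        rw [norm_smul, Real.norm_eq_abs]
        calc |⟪v, x i⟫| * ‖x i‖ ≤ |⟪v, x i⟫| * 1 :=
              mul_le_mul_of_nonneg_left (hx i hi) (abs_nonneg _)
          _ = |⟪v, x i⟫| := mul_one _
      have h2 : (∑ i ∈ B, |⟪v, x i⟫|) ^ 2 ≤ B.card * ∑ i ∈ B, ⟪v, x i⟫ ^ 2 := by
        have := sq_sum_le_card_mul_sum_sq (s := B) (f := fun i => |⟪v, x i⟫|)
        simpa [sq_abs] using this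
      calc (‖c‖ * ‖∑ i ∈ B, ⟪v, x i⟫ • x i‖) ^ 2
          = ‖c‖ ^ 2 * ‖∑ i ∈ B, ⟪v, x i⟫ • x i‖ ^ 2 := by ring
        _ ≤ ‖c‖ ^ 2 * (∑ i ∈ B, |⟪v, x i⟫|) ^ 2 := by
            refine mul_le_mul_of_nonneg_left ?_ (by positivity)
            exact pow_le_pow_left₀ (norm_nonneg _) h1 2
        _ ≤ c ^ 2 * (B.card * ∑ i ∈ B, ⟪v, x i⟫ ^ 2) := by
            rw [Real.norm_eq_abs, sq_abs]
            exact mul_le_mul_of_nonneg_left h2 (by positivity)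
    have hS : (0:ℝ) ≤ ∑ i ∈ B, ⟪v, x i⟫ ^ 2 := Finset.sum_nonneg fun i _ => sq_nonneg _
    have hkey : c ^ 2 * (B.card * ∑ i ∈ B, ⟪v, x i⟫ ^ 2) ≤ 2 * (c * ∑ i ∈ B, ⟪v, x i⟫ ^ 2) := by
      have h3 : c ^ 2 * (B.card : ℝ) ≤ 2 * c := by
        calc c ^ 2 * (B.card:ℝ) = c * (c * B.card) := by ring
          _ ≤ c * 2 := mul_le_mul_of_nonneg_left hcard hc
          _ = 2 * c := mul_comm _ _
      calc c ^ 2 * ((B.card:ℝ) * ∑ i ∈ B, ⟪v, x i⟫ ^ 2)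
          = (c ^ 2 * B.card) * ∑ i ∈ B, ⟪v, x i⟫ ^ 2 := by ring
        _ ≤ (2 * c) * ∑ i ∈ B, ⟪v, x i⟫ ^ 2 := mul_le_mul_of_nonneg_right h3 hS
        _ = 2 * (c * ∑ i ∈ B, ⟪v, x i⟫ ^ 2) := by ring
    nlinarith [hnorm, hkey]
  nlinarith [hsq, norm_nonneg v, norm_nonneg (v - c • ∑ i ∈ B, ⟪v, x i⟫ • x i)]

/-- The canonical linear pairing of two Euclidean spaces into their `L²` product. -/
noncomputable def pr (dA dB : ℕ) :
    (EuclideanSpace ℝ (Fin dA) × EuclideanSpace ℝ (Fin dB)) ≃ₗ[ℝ]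
      WithLp 2 (EuclideanSpace ℝ (Fin dA) × EuclideanSpace ℝ (Fin dB)) :=
  (WithLp.linearEquiv 2 ℝ _).symm

lemma pr_norm {dA dB : ℕ} (p : EuclideanSpace ℝ (Fin dA) × EuclideanSpace ℝ (Fin dB)) :
    ‖pr dA dB p‖ = Real.sqrt (‖p.1‖ ^ 2 + ‖p.2‖ ^ 2) := by
  rw [WithLp.prod_norm_eq_of_L2]; rfl

lemma pr_inner {dA dB : ℕ} (p q : EuclideanSpace ℝ (Fin dA) × EuclideanSpace ℝ (Fin dB)) :
    ⟪pr dA dB p, pr dA dB q⟫ = ⟪p.1, q.1⟫ + ⟪p.2, q.2⟫ := by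
  rw [WithLp.prod_inner_apply]; rfl

lemma fst_norm_le_pr {dA dB : ℕ} (p : EuclideanSpace ℝ (Fin dA) × EuclideanSpace ℝ (Fin dB)) :
    ‖p.1‖ ≤ ‖pr dA dB p‖ := by
  rw [pr_norm]
  calc ‖p.1‖ = Real.sqrt (‖p.1‖ ^ 2) := (Real.sqrt_sq (norm_nonneg _)).symm
    _ ≤ Real.sqrt (‖p.1‖ ^ 2 + ‖p.2‖ ^ 2) :=
        Real.sqrt_le_sqrt (le_add_of_nonneg_right (sq_nonneg _))

lemma snd_norm_le_pr {dA dB : ℕ} (p : EuclideanSpace ℝ (Fin dA) × EuclideanSpace ℝ (Fin dB)) :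
    ‖p.2‖ ≤ ‖pr dA dB p‖ := by
  rw [pr_norm]
  calc ‖p.2‖ = Real.sqrt (‖p.2‖ ^ 2) := (Real.sqrt_sq (norm_nonneg _)).symm
    _ ≤ Real.sqrt (‖p.1‖ ^ 2 + ‖p.2‖ ^ 2) :=
        Real.sqrt_le_sqrt (le_add_of_nonneg_left (sq_nonneg _))
set_option maxHeartbeats 1000000 in
/-- ℓ₂-sensitivity over the whole training horizon of the concatenated sensitive vectors
`SV^A` and `SV^B` for two runs of mini-batch gradient descent on datasets differing in
at most one instance. -/
theorem stmt16 (dA dB m s e : ℕ) (hm : 0 < m) (hs : 0 < s) (he : 0 < e)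
    (n T : ℕ) (hn : n = m * s) (hT : T = m * e)
    (G η : ℝ) (hG : 1 / 2 < G) (hη0 : 0 < η) (hη1 : η ≤ 1)
    (xA xA' : Fin n → EuclideanSpace ℝ (Fin dA))
    (xB xB' : Fin n → EuclideanSpace ℝ (Fin dB))
    (y y' : Fin n → ℝ)
    (hy : ∀ i, y i = 1 ∨ y i = -1) (hy' : ∀ i, y' i = 1 ∨ y' i = -1)
    (hx : ∀ i, Real.sqrt (‖xA i‖ ^ 2 + ‖xB i‖ ^ 2) ≤ 1)
    (hx' : ∀ i, Real.sqrt (‖xA' i‖ ^ 2 + ‖xB' i‖ ^ 2) ≤ 1)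
    (i0 : Fin n)
    (hdiff : ∀ i, i ≠ i0 → xA i = xA' i ∧ xB i = xB' i ∧ y i = y' i)
    (B : ℕ → Finset (Fin n)) (hB : ∀ t, (B t).card = s)
    (hepoch : ∀ ep : ℕ, ep < e →
      ((Finset.Icc (ep * m + 1) (ep * m + m)).filter fun t => i0 ∈ B t).card ≤ 1)
    (θA θA' : ℕ → EuclideanSpace ℝ (Fin dA))
    (θB θB' : ℕ → EuclideanSpace ℝ (Fin dB))
    (hinitA : θA 0 = θA' 0) (hinitB : θB 0 = θB' 0)
    (hupdA : ∀ t : ℕ, 1 ≤ t → θA t = θA (t - 1) - (η / (4 * s)) •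
      ∑ i ∈ B t, (⟪θA (t - 1), xA i⟫ + ⟪θB (t - 1), xB i⟫ - 2 * y i) • xA i)
    (hupdB : ∀ t : ℕ, 1 ≤ t → θB t = θB (t - 1) - (η / (4 * s)) •
      ∑ i ∈ B t, (⟪θA (t - 1), xA i⟫ + ⟪θB (t - 1), xB i⟫ - 2 * y i) • xB i)
    (hupdA' : ∀ t : ℕ, 1 ≤ t → θA' t = θA' (t - 1) - (η / (4 * s)) •
      ∑ i ∈ B t, (⟪θA' (t - 1), xA' i⟫ + ⟪θB' (t - 1), xB' i⟫ - 2 * y' i) • xA' i)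
    (hupdB' : ∀ t : ℕ, 1 ≤ t → θB' t = θB' (t - 1) - (η / (4 * s)) •
      ∑ i ∈ B t, (⟪θA' (t - 1), xA' i⟫ + ⟪θB' (t - 1), xB' i⟫ - 2 * y' i) • xB' i)
    (hgrad : ∀ t : ℕ, 1 ≤ t → t ≤ T → ∀ i,
      (1 / 4) * |⟪θA (t - 1), xA i⟫ + ⟪θB (t - 1), xB i⟫ - 2 * y i| *
        Real.sqrt (‖xA i‖ ^ 2 + ‖xB i‖ ^ 2) ≤ G)
    (hgrad' : ∀ t : ℕ, 1 ≤ t → t ≤ T → ∀ i,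
      (1 / 4) * |⟪θA' (t - 1), xA' i⟫ + ⟪θB' (t - 1), xB' i⟫ - 2 * y' i| *
        Real.sqrt (‖xA' i‖ ^ 2 + ‖xB' i‖ ^ 2) ≤ G)
    (hbound : ∀ t : ℕ, 1 ≤ t → t ≤ T →
      Real.sqrt (‖θA (t - 1)‖ ^ 2 + ‖θB (t - 1)‖ ^ 2) ≤ 4 * G - 2)
    (hbound' : ∀ t : ℕ, 1 ≤ t → t ≤ T →
      Real.sqrt (‖θA' (t - 1)‖ ^ 2 + ‖θB' (t - 1)‖ ^ 2) ≤ 4 * G - 2) :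
    Real.sqrt (∑ t ∈ Finset.Icc 1 T, ∑ i ∈ B t,
        ((⟪θA (t - 1), xA i⟫ - 2 * y i) - (⟪θA' (t - 1), xA' i⟫ - 2 * y' i)) ^ 2) ≤
      Real.sqrt (8 * G ^ 2 * e ^ 2 * T * η ^ 2 / s + 64 * G ^ 2 * e) ∧
    Real.sqrt (∑ t ∈ Finset.Icc 1 T, ∑ i ∈ B t,
        (⟪θB (t - 1), xB i⟫ - ⟪θB' (t - 1), xB' i⟫) ^ 2) ≤
      Real.sqrt (8 * G ^ 2 * e ^ 2 * T * η ^ 2 / s + (8 * G - 4) ^ 2 * e) := by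
  classical
  have hG0 : (0:ℝ) < G := by linarith
  have hs0 : (0:ℝ) < (s:ℝ) := by exact_mod_cast hs
  have hsne : (s:ℝ) ≠ 0 := ne_of_gt hs0
  set c : ℝ := η / (4 * s) with hcdef
  have hc0 : 0 ≤ c := by positivity
  set X : Fin n → WithLp 2 (EuclideanSpace ℝ (Fin dA) × EuclideanSpace ℝ (Fin dB)) :=
    fun i => pr dA dB (xA i, xB i) with hXdef
  set Δ : ℕ → WithLp 2 (EuclideanSpace ℝ (Fin dA) × EuclideanSpace ℝ (Fin dB)) :=
    fun t => pr dA dB (θA t - θA' t, θB t - θB' t) with hΔdef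
  have hXapp : ∀ i, X i = pr dA dB (xA i, xB i) := fun i => by rw [hXdef]
  have hΔapp : ∀ u, Δ u = pr dA dB (θA u - θA' u, θB u - θB' u) := fun u => by rw [hΔdef]
  have hXnorm : ∀ i, ‖X i‖ ≤ 1 := fun i => by rw [hXapp, pr_norm]; exact hx i
  have hΔinner : ∀ u i, ⟪Δ u, X i⟫ = ⟪θA u - θA' u, xA i⟫ + ⟪θB u - θB' u, xB i⟫ := by
    intro u i; rw [hΔapp, hXapp, pr_inner]
  have hΔ0 : Δ 0 = 0 := by
    rw [hΔapp, hinitA, hinitB, sub_self, sub_self]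
    exact map_zero _
  -- norms of components of Δ
  have hΔA : ∀ u, ‖θA u - θA' u‖ ≤ ‖Δ u‖ := fun u => by
    rw [hΔapp]; exact fst_norm_le_pr (θA u - θA' u, θB u - θB' u)
  have hΔB : ∀ u, ‖θB u - θB' u‖ ≤ ‖Δ u‖ := fun u => by
    rw [hΔapp]; exact snd_norm_le_pr (θA u - θA' u, θB u - θB' u)
  have hxA1 : ∀ i, ‖xA i‖ ≤ 1 := fun i => (fst_norm_le_pr (xA i, xB i)).trans
    (by rw [pr_norm]; exact hx i)
  have hxB1 : ∀ i, ‖xB i‖ ≤ 1 := fun i => (snd_norm_le_pr (xA i, xB i)).trans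
    (by rw [pr_norm]; exact hx i)
  have hxA1' : ∀ i, ‖xA' i‖ ≤ 1 := fun i => (fst_norm_le_pr (xA' i, xB' i)).trans
    (by rw [pr_norm]; exact hx' i)
  have hxB1' : ∀ i, ‖xB' i‖ ≤ 1 := fun i => (snd_norm_le_pr (xA' i, xB' i)).trans
    (by rw [pr_norm]; exact hx' i)
  have hθA : ∀ t : ℕ, 1 ≤ t → t ≤ T → ‖θA (t-1)‖ ≤ 4*G - 2 := fun t h1 h2 =>
    (fst_norm_le_pr (θA (t-1), θB (t-1))).trans (by rw [pr_norm]; exact hbound t h1 h2)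
  have hθB : ∀ t : ℕ, 1 ≤ t → t ≤ T → ‖θB (t-1)‖ ≤ 4*G - 2 := fun t h1 h2 =>
    (snd_norm_le_pr (θA (t-1), θB (t-1))).trans (by rw [pr_norm]; exact hbound t h1 h2)
  have hθA' : ∀ t : ℕ, 1 ≤ t → t ≤ T → ‖θA' (t-1)‖ ≤ 4*G - 2 := fun t h1 h2 =>
    (fst_norm_le_pr (θA' (t-1), θB' (t-1))).trans (by rw [pr_norm]; exact hbound' t h1 h2)
  have hθB' : ∀ t : ℕ, 1 ≤ t → t ≤ T → ‖θB' (t-1)‖ ≤ 4*G - 2 := fun t h1 h2 =>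
    (snd_norm_le_pr (θA' (t-1), θB' (t-1))).trans (by rw [pr_norm]; exact hbound' t h1 h2)
  -- one-step recursion
  have step : ∀ t : ℕ, 1 ≤ t → t ≤ T →
      ‖Δ t‖ ≤ ‖Δ (t-1)‖ + (if i0 ∈ B t then 2*η*G/s else 0) := by
    intro t ht1 htT
    have hkeyA : ∀ i, i ≠ i0 →
        (⟪θA (t-1), xA i⟫ + ⟪θB (t-1), xB i⟫ - 2 * y i) • xA i
          - (⟪θA' (t-1), xA' i⟫ + ⟪θB' (t-1), xB' i⟫ - 2 * y' i) • xA' i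
        = ⟪Δ (t-1), X i⟫ • xA i := by
      intro i hi
      obtain ⟨e1, e2, e3⟩ := hdiff i hi
      rw [← e1, ← e2, ← e3, ← sub_smul, hΔinner, inner_sub_left, inner_sub_left]
      congr 1; ring
    have hkeyB : ∀ i, i ≠ i0 →
        (⟪θA (t-1), xA i⟫ + ⟪θB (t-1), xB i⟫ - 2 * y i) • xB i
          - (⟪θA' (t-1), xA' i⟫ + ⟪θB' (t-1), xB' i⟫ - 2 * y' i) • xB' i
        = ⟪Δ (t-1), X i⟫ • xB i := by
      intro i hi
      obtain ⟨e1, e2, e3⟩ := hdiff i hi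
      rw [← e1, ← e2, ← e3, ← sub_smul, hΔinner, inner_sub_left, inner_sub_left]
      congr 1; ring
    have hA0 : θA t - θA' t = (θA (t-1) - θA' (t-1))
        - c • ∑ i ∈ B t, ((⟪θA (t-1), xA i⟫ + ⟪θB (t-1), xB i⟫ - 2 * y i) • xA i
            - (⟪θA' (t-1), xA' i⟫ + ⟪θB' (t-1), xB' i⟫ - 2 * y' i) • xA' i) := by
      rw [hupdA t ht1, hupdA' t ht1, Finset.sum_sub_distrib, smul_sub]
      abel
    have hB0 : θB t - θB' t = (θB (t-1) - θB' (t-1))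
        - c • ∑ i ∈ B t, ((⟪θA (t-1), xA i⟫ + ⟪θB (t-1), xB i⟫ - 2 * y i) • xB i
            - (⟪θA' (t-1), xA' i⟫ + ⟪θB' (t-1), xB' i⟫ - 2 * y' i) • xB' i) := by
      rw [hupdB t ht1, hupdB' t ht1, Finset.sum_sub_distrib, smul_sub]
      abel
    by_cases hi0 : i0 ∈ B t
    · -- the differing instance is in this batch
      have hsplitA : ∑ i ∈ B t, ((⟪θA (t-1), xA i⟫ + ⟪θB (t-1), xB i⟫ - 2 * y i) • xA i
            - (⟪θA' (t-1), xA' i⟫ + ⟪θB' (t-1), xB' i⟫ - 2 * y' i) • xA' i)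
          = ((⟪θA (t-1), xA i0⟫ + ⟪θB (t-1), xB i0⟫ - 2 * y i0) • xA i0
            - (⟪θA' (t-1), xA' i0⟫ + ⟪θB' (t-1), xB' i0⟫ - 2 * y' i0) • xA' i0)
            + ∑ i ∈ (B t).erase i0, ⟪Δ (t-1), X i⟫ • xA i := by
        rw [← Finset.add_sum_erase _ _ hi0]
        congr 1
        exact Finset.sum_congr rfl fun i hi => hkeyA i (Finset.ne_of_mem_erase hi)
      have hsplitB : ∑ i ∈ B t, ((⟪θA (t-1), xA i⟫ + ⟪θB (t-1), xB i⟫ - 2 * y i) • xB i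
            - (⟪θA' (t-1), xA' i⟫ + ⟪θB' (t-1), xB' i⟫ - 2 * y' i) • xB' i)
          = ((⟪θA (t-1), xA i0⟫ + ⟪θB (t-1), xB i0⟫ - 2 * y i0) • xB i0
            - (⟪θA' (t-1), xA' i0⟫ + ⟪θB' (t-1), xB' i0⟫ - 2 * y' i0) • xB' i0)
            + ∑ i ∈ (B t).erase i0, ⟪Δ (t-1), X i⟫ • xB i := by
        rw [← Finset.add_sum_erase _ _ hi0]
        congr 1
        exact Finset.sum_congr rfl fun i hi => hkeyB i (Finset.ne_of_mem_erase hi)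
      have hpair : ((θA t - θA' t, θB t - θB' t) :
            EuclideanSpace ℝ (Fin dA) × EuclideanSpace ℝ (Fin dB))
          = ((θA (t-1) - θA' (t-1), θB (t-1) - θB' (t-1))
              - c • ∑ i ∈ (B t).erase i0, ⟪Δ (t-1), X i⟫ • ((xA i, xB i) :
                EuclideanSpace ℝ (Fin dA) × EuclideanSpace ℝ (Fin dB)))
            - c • (((⟪θA (t-1), xA i0⟫ + ⟪θB (t-1), xB i0⟫ - 2 * y i0) • xA i0
                    - (⟪θA' (t-1), xA' i0⟫ + ⟪θB' (t-1), xB' i0⟫ - 2 * y' i0) • xA' i0,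
                   (⟪θA (t-1), xA i0⟫ + ⟪θB (t-1), xB i0⟫ - 2 * y i0) • xB i0
                    - (⟪θA' (t-1), xA' i0⟫ + ⟪θB' (t-1), xB' i0⟫ - 2 * y' i0) • xB' i0) :
                EuclideanSpace ℝ (Fin dA) × EuclideanSpace ℝ (Fin dB)) := by
        refine Prod.ext ?_ ?_ <;>
          simp only [Prod.fst_sub, Prod.snd_sub, Prod.smul_fst, Prod.smul_snd, Prod.fst_sum,
            Prod.snd_sum, Prod.smul_mk]
        · rw [hA0, hsplitA, smul_add]; abel
        · rw [hB0, hsplitB, smul_add]; abel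
      have hΔt : Δ t = (Δ (t-1) - c • ∑ i ∈ (B t).erase i0, ⟪Δ (t-1), X i⟫ • X i)
          - c • pr dA dB ((⟪θA (t-1), xA i0⟫ + ⟪θB (t-1), xB i0⟫ - 2 * y i0) • xA i0
                    - (⟪θA' (t-1), xA' i0⟫ + ⟪θB' (t-1), xB' i0⟫ - 2 * y' i0) • xA' i0,
                   (⟪θA (t-1), xA i0⟫ + ⟪θB (t-1), xB i0⟫ - 2 * y i0) • xB i0
                    - (⟪θA' (t-1), xA' i0⟫ + ⟪θB' (t-1), xB' i0⟫ - 2 * y' i0) • xB' i0) := by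
        rw [hΔapp t, hpair, map_sub, map_sub, map_smul, map_smul, map_sum, ← hΔapp (t-1)]
        congr 2
        all_goals
          first
          | rfl
          | exact Finset.sum_congr rfl fun i hi => by rw [map_smul, ← hXapp]
      have hWnorm : ‖pr dA dB ((⟪θA (t-1), xA i0⟫ + ⟪θB (t-1), xB i0⟫ - 2 * y i0) • xA i0
                    - (⟪θA' (t-1), xA' i0⟫ + ⟪θB' (t-1), xB' i0⟫ - 2 * y' i0) • xA' i0,
                   (⟪θA (t-1), xA i0⟫ + ⟪θB (t-1), xB i0⟫ - 2 * y i0) • xB i0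
                    - (⟪θA' (t-1), xA' i0⟫ + ⟪θB' (t-1), xB' i0⟫ - 2 * y' i0) • xB' i0)‖
          ≤ 8 * G := by
        have hpairsub : (((⟪θA (t-1), xA i0⟫ + ⟪θB (t-1), xB i0⟫ - 2 * y i0) • xA i0
                    - (⟪θA' (t-1), xA' i0⟫ + ⟪θB' (t-1), xB' i0⟫ - 2 * y' i0) • xA' i0,
                   (⟪θA (t-1), xA i0⟫ + ⟪θB (t-1), xB i0⟫ - 2 * y i0) • xB i0
                    - (⟪θA' (t-1), xA' i0⟫ + ⟪θB' (t-1), xB' i0⟫ - 2 * y' i0) • xB' i0) :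
                EuclideanSpace ℝ (Fin dA) × EuclideanSpace ℝ (Fin dB))
            = (⟪θA (t-1), xA i0⟫ + ⟪θB (t-1), xB i0⟫ - 2 * y i0) • ((xA i0, xB i0) :
                EuclideanSpace ℝ (Fin dA) × EuclideanSpace ℝ (Fin dB))
              - (⟪θA' (t-1), xA' i0⟫ + ⟪θB' (t-1), xB' i0⟫ - 2 * y' i0) • ((xA' i0, xB' i0) :
                EuclideanSpace ℝ (Fin dA) × EuclideanSpace ℝ (Fin dB)) := by
          simp [Prod.smul_mk, Prod.mk_sub_mk]
        rw [hpairsub, map_sub, map_smul, map_smul]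
        have e1 : ‖(⟪θA (t-1), xA i0⟫ + ⟪θB (t-1), xB i0⟫ - 2 * y i0) • pr dA dB (xA i0, xB i0)‖
            ≤ 4 * G := by
          rw [norm_smul, Real.norm_eq_abs, pr_norm]
          have := hgrad t ht1 htT i0
          linarith
        have e2 : ‖(⟪θA' (t-1), xA' i0⟫ + ⟪θB' (t-1), xB' i0⟫ - 2 * y' i0) •
              pr dA dB (xA' i0, xB' i0)‖ ≤ 4 * G := by
          rw [norm_smul, Real.norm_eq_abs, pr_norm]
          have := hgrad' t ht1 htT i0
          linarith
        calc ‖_ - _‖ ≤ _ + _ := norm_sub_le _ _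
          _ ≤ 4 * G + (4 * G) := add_le_add e1 e2
          _ = 8 * G := by ring
      rw [hΔt, if_pos hi0]
      calc ‖_ - _‖ ≤ ‖Δ (t-1) - c • ∑ i ∈ (B t).erase i0, ⟪Δ (t-1), X i⟫ • X i‖
            + ‖c • pr dA dB _‖ := norm_sub_le _ _
        _ ≤ ‖Δ (t-1)‖ + 2*η*G/s := by
            refine add_le_add ?_ ?_
            · refine nonexp _ _ (fun i _ => hXnorm i) hc0 ?_ _
              have hcard : (((B t).erase i0).card : ℝ) ≤ s := by
                have := Finset.card_erase_le (a := i0) (s := B t)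
                have := hB t
                exact_mod_cast le_trans (Finset.card_erase_le) (le_of_eq (hB t))
              calc c * (((B t).erase i0).card : ℝ) ≤ c * s :=
                    mul_le_mul_of_nonneg_left hcard hc0
                _ = η / 4 := by rw [hcdef]; field_simp; try ring
                _ ≤ 2 := by linarith
            · rw [norm_smul, Real.norm_eq_abs, abs_of_nonneg hc0]
              calc c * ‖pr dA dB _‖ ≤ c * (8 * G) :=
                    mul_le_mul_of_nonneg_left hWnorm hc0
                _ = 2*η*G/s := by rw [hcdef]; field_simp; try ring
    · -- no differing instance in this batch
      have hsplitA : ∑ i ∈ B t, ((⟪θA (t-1), xA i⟫ + ⟪θB (t-1), xB i⟫ - 2 * y i) • xA i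
            - (⟪θA' (t-1), xA' i⟫ + ⟪θB' (t-1), xB' i⟫ - 2 * y' i) • xA' i)
          = ∑ i ∈ B t, ⟪Δ (t-1), X i⟫ • xA i :=
        Finset.sum_congr rfl fun i hi => hkeyA i (fun h => hi0 (h ▸ hi))
      have hsplitB : ∑ i ∈ B t, ((⟪θA (t-1), xA i⟫ + ⟪θB (t-1), xB i⟫ - 2 * y i) • xB i
            - (⟪θA' (t-1), xA' i⟫ + ⟪θB' (t-1), xB' i⟫ - 2 * y' i) • xB' i)
          = ∑ i ∈ B t, ⟪Δ (t-1), X i⟫ • xB i :=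
        Finset.sum_congr rfl fun i hi => hkeyB i (fun h => hi0 (h ▸ hi))
      have hpair : ((θA t - θA' t, θB t - θB' t) :
            EuclideanSpace ℝ (Fin dA) × EuclideanSpace ℝ (Fin dB))
          = (θA (t-1) - θA' (t-1), θB (t-1) - θB' (t-1))
              - c • ∑ i ∈ B t, ⟪Δ (t-1), X i⟫ • ((xA i, xB i) :
                EuclideanSpace ℝ (Fin dA) × EuclideanSpace ℝ (Fin dB)) := by
        refine Prod.ext ?_ ?_ <;>
          simp only [Prod.fst_sub, Prod.snd_sub, Prod.smul_fst, Prod.smul_snd, Prod.fst_sum,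
            Prod.snd_sum, Prod.smul_mk]
        · rw [hA0, hsplitA]
        · rw [hB0, hsplitB]
      have hΔt : Δ t = Δ (t-1) - c • ∑ i ∈ B t, ⟪Δ (t-1), X i⟫ • X i := by
        rw [hΔapp t, hpair, map_sub, map_smul, map_sum, ← hΔapp (t-1)]
        congr 2
        all_goals
          first
          | rfl
          | exact Finset.sum_congr rfl fun i hi => by rw [map_smul, ← hXapp]
      rw [hΔt, if_neg hi0, add_zero]
      refine nonexp _ _ (fun i _ => hXnorm i) hc0 ?_ _
      rw [hB t]
      calc c * (s : ℝ) = η / 4 := by rw [hcdef]; field_simp; try ring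
        _ ≤ 2 := by linarith
  -- growth of the parameter difference
  have growth : ∀ t : ℕ, t ≤ T → ‖Δ t‖ ≤ (2*η*G/s) *
      (((Finset.Icc 1 t).filter (fun u => i0 ∈ B u)).card : ℝ) := by
    intro t
    induction t with
    | zero =>
      intro _
      simp [hΔ0]
    | succ k ih =>
      intro hk
      have hk' : k ≤ T := Nat.le_of_succ_le hk
      have h1 := step (k+1) (Nat.succ_le_succ (Nat.zero_le k)) hk
      have hins : Finset.Icc 1 (k+1) = insert (k+1) (Finset.Icc 1 k) := by
        ext u
        simp only [Finset.mem_Icc, Finset.mem_insert]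
        omega
      have hnot : (k+1) ∉ Finset.Icc 1 k := by simp
      rw [hins, Finset.filter_insert]
      by_cases hmem : i0 ∈ B (k+1)
      · rw [if_pos hmem, Finset.card_insert_of_notMem (fun h => hnot (Finset.mem_of_mem_filter _ h))]
        have := ih hk'
        have hpos : (0:ℝ) ≤ 2*η*G/s := by positivity
        push_cast
        rw [if_pos hmem] at h1
        simp only [Nat.add_sub_cancel] at h1
        nlinarith [this, h1]
      · rw [if_neg hmem]
        have := ih hk'
        rw [if_neg hmem] at h1
        simp only [Nat.add_sub_cancel] at h1
        linarith
  -- at most one differing batch per epoch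
  have hcntT : ((Finset.Icc 1 T).filter (fun u => i0 ∈ B u)).card ≤ e := by
    have hsub : (Finset.Icc 1 T).filter (fun u => i0 ∈ B u) ⊆
        (Finset.range e).biUnion (fun ep =>
          (Finset.Icc (ep * m + 1) (ep * m + m)).filter (fun u => i0 ∈ B u)) := by
      intro t ht
      simp only [Finset.mem_filter, Finset.mem_Icc] at ht
      obtain ⟨⟨h1t, htT⟩, hmem⟩ := ht
      have h1 := Nat.div_add_mod (t-1) m
      have h2 : (t-1) % m < m := Nat.mod_lt _ hm
      refine Finset.mem_biUnion.mpr ⟨(t-1)/m, Finset.mem_range.mpr ?_, ?_⟩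
      · rw [Nat.div_lt_iff_lt_mul hm, mul_comm]
        have : t ≤ m * e := hT ▸ htT
        omega
      · simp only [Finset.mem_filter, Finset.mem_Icc]
        refine ⟨⟨?_, ?_⟩, hmem⟩
        · have := Nat.div_mul_le_self (t-1) m
          omega
        · rw [mul_comm]
          omega
    calc ((Finset.Icc 1 T).filter (fun u => i0 ∈ B u)).card
        ≤ ((Finset.range e).biUnion (fun ep =>
          (Finset.Icc (ep * m + 1) (ep * m + m)).filter (fun u => i0 ∈ B u))).card :=
          Finset.card_le_card hsub
      _ ≤ ∑ ep ∈ Finset.range e,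
          ((Finset.Icc (ep * m + 1) (ep * m + m)).filter (fun u => i0 ∈ B u)).card :=
          Finset.card_biUnion_le
      _ ≤ ∑ _ep ∈ Finset.range e, 1 :=
          Finset.sum_le_sum fun ep hep => hepoch ep (Finset.mem_range.mp hep)
      _ = e := by simp
  -- uniform bound on the parameter difference
  have hD : ∀ t : ℕ, 1 ≤ t → t ≤ T → ‖Δ (t-1)‖ ≤ 2*η*G*e/s := by
    intro t ht1 htT
    have h1 := growth (t-1) (by omega)
    have hmono : ((Finset.Icc 1 (t-1)).filter (fun u => i0 ∈ B u)).card ≤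
        ((Finset.Icc 1 T).filter (fun u => i0 ∈ B u)).card :=
      Finset.card_le_card (Finset.filter_subset_filter _
        (Finset.Icc_subset_Icc_right (by omega)))
    have hce : (((Finset.Icc 1 (t-1)).filter (fun u => i0 ∈ B u)).card : ℝ) ≤ e := by
      exact_mod_cast le_trans hmono hcntT
    have hpos : (0:ℝ) ≤ 2*η*G/s := by positivity
    calc ‖Δ (t-1)‖ ≤ (2*η*G/s) *
          (((Finset.Icc 1 (t-1)).filter (fun u => i0 ∈ B u)).card : ℝ) := h1
      _ ≤ (2*η*G/s) * e := mul_le_mul_of_nonneg_left hce hpos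
      _ = 2*η*G*e/s := by ring
  have h2y : ∀ i, |2 * y i| = 2 := by
    intro i; rcases hy i with h | h <;> rw [h] <;> norm_num
  have h2y' : ∀ i, |2 * y' i| = 2 := by
    intro i; rcases hy' i with h | h <;> rw [h] <;> norm_num
  have hDe : (0:ℝ) ≤ 2*η*G*e/s := by positivity
  -- per-term bounds
  have htermA : ∀ t : ℕ, 1 ≤ t → t ≤ T → ∀ i,
      ((⟪θA (t-1), xA i⟫ - 2*y i) - (⟪θA' (t-1), xA' i⟫ - 2*y' i))^2 ≤
        (if i = i0 then 64*G^2 else 4*η^2*G^2*e^2/s^2) := by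
    intro t ht1 htT i
    by_cases hi : i = i0
    · rw [if_pos hi]
      have b1 : |⟪θA (t-1), xA i⟫| ≤ 4*G - 2 := by
        refine (abs_real_inner_le_norm _ _).trans ?_
        calc ‖θA (t-1)‖ * ‖xA i‖ ≤ (4*G-2) * 1 :=
              mul_le_mul (hθA t ht1 htT) (hxA1 i) (norm_nonneg _) (by linarith)
          _ = 4*G-2 := mul_one _
      have b1' : |⟪θA' (t-1), xA' i⟫| ≤ 4*G - 2 := by
        refine (abs_real_inner_le_norm _ _).trans ?_
        calc ‖θA' (t-1)‖ * ‖xA' i‖ ≤ (4*G-2) * 1 :=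
              mul_le_mul (hθA' t ht1 htT) (hxA1' i) (norm_nonneg _) (by linarith)
          _ = 4*G-2 := mul_one _
      have d1 := abs_le.mp b1
      have d1' := abs_le.mp b1'
      have d2 := abs_le.mp (h2y i).le
      have d2' := abs_le.mp (h2y' i).le
      calc ((⟪θA (t-1), xA i⟫ - 2*y i) - (⟪θA' (t-1), xA' i⟫ - 2*y' i))^2
          ≤ (8*G)^2 := sq_le_sq' (by linarith [d1.1, d1.2, d1'.1, d1'.2, d2.1, d2.2, d2'.1, d2'.2])
            (by linarith [d1.1, d1.2, d1'.1, d1'.2, d2.1, d2.2, d2'.1, d2'.2])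
        _ = 64*G^2 := by ring
    · rw [if_neg hi]
      obtain ⟨e1, e2, e3⟩ := hdiff i hi
      have hdval : (⟪θA (t-1), xA i⟫ - 2*y i) - (⟪θA' (t-1), xA' i⟫ - 2*y' i)
          = ⟪θA (t-1) - θA' (t-1), xA i⟫ := by
        rw [← e1, ← e3, inner_sub_left]; ring
      rw [hdval]
      have habs : |⟪θA (t-1) - θA' (t-1), xA i⟫| ≤ 2*η*G*e/s := by
        refine (abs_real_inner_le_norm _ _).trans ?_
        calc ‖θA (t-1) - θA' (t-1)‖ * ‖xA i‖ ≤ ‖Δ (t-1)‖ * 1 :=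
              mul_le_mul (hΔA (t-1)) (hxA1 i) (norm_nonneg _) (norm_nonneg _)
          _ = ‖Δ (t-1)‖ := mul_one _
          _ ≤ 2*η*G*e/s := hD t ht1 htT
      calc ⟪θA (t-1) - θA' (t-1), xA i⟫^2 ≤ (2*η*G*e/s)^2 := by
            rw [← sq_abs]; exact pow_le_pow_left₀ (abs_nonneg _) habs 2
        _ = 4*η^2*G^2*e^2/s^2 := by ring
  have htermB : ∀ t : ℕ, 1 ≤ t → t ≤ T → ∀ i,
      (⟪θB (t-1), xB i⟫ - ⟪θB' (t-1), xB' i⟫)^2 ≤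
        (if i = i0 then (8*G-4)^2 else 4*η^2*G^2*e^2/s^2) := by
    intro t ht1 htT i
    by_cases hi : i = i0
    · rw [if_pos hi]
      have b1 : |⟪θB (t-1), xB i⟫| ≤ 4*G - 2 := by
        refine (abs_real_inner_le_norm _ _).trans ?_
        calc ‖θB (t-1)‖ * ‖xB i‖ ≤ (4*G-2) * 1 :=
              mul_le_mul (hθB t ht1 htT) (hxB1 i) (norm_nonneg _) (by linarith)
          _ = 4*G-2 := mul_one _
      have b1' : |⟪θB' (t-1), xB' i⟫| ≤ 4*G - 2 := by
        refine (abs_real_inner_le_norm _ _).trans ?_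
        calc ‖θB' (t-1)‖ * ‖xB' i‖ ≤ (4*G-2) * 1 :=
              mul_le_mul (hθB' t ht1 htT) (hxB1' i) (norm_nonneg _) (by linarith)
          _ = 4*G-2 := mul_one _
      have d1 := abs_le.mp b1
      have d1' := abs_le.mp b1'
      exact sq_le_sq' (by linarith [d1.1, d1.2, d1'.1, d1'.2])
        (by linarith [d1.1, d1.2, d1'.1, d1'.2])
    · rw [if_neg hi]
      obtain ⟨e1, e2, e3⟩ := hdiff i hi
      have hdval : ⟪θB (t-1), xB i⟫ - ⟪θB' (t-1), xB' i⟫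
          = ⟪θB (t-1) - θB' (t-1), xB i⟫ := by
        rw [← e2, inner_sub_left]
      rw [hdval]
      have habs : |⟪θB (t-1) - θB' (t-1), xB i⟫| ≤ 2*η*G*e/s := by
        refine (abs_real_inner_le_norm _ _).trans ?_
        calc ‖θB (t-1) - θB' (t-1)‖ * ‖xB i‖ ≤ ‖Δ (t-1)‖ * 1 :=
              mul_le_mul (hΔB (t-1)) (hxB1 i) (norm_nonneg _) (norm_nonneg _)
          _ = ‖Δ (t-1)‖ := mul_one _
          _ ≤ 2*η*G*e/s := hD t ht1 htT
      calc ⟪θB (t-1) - θB' (t-1), xB i⟫^2 ≤ (2*η*G*e/s)^2 := by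
            rw [← sq_abs]; exact pow_le_pow_left₀ (abs_nonneg _) habs 2
        _ = 4*η^2*G^2*e^2/s^2 := by ring
  -- summing up
  have hsummain : ∀ (C1 : ℝ), 0 ≤ C1 →
      ∀ (f : ℕ → Fin n → ℝ),
      (∀ t : ℕ, 1 ≤ t → t ≤ T → ∀ i, f t i ≤ (if i = i0 then C1 else 4*η^2*G^2*e^2/s^2)) →
      ∑ t ∈ Finset.Icc 1 T, ∑ i ∈ B t, f t i ≤ 8*G^2*e^2*T*η^2/s + C1 * e := by
    intro C1 hC1 f hf
    have hC2 : (0:ℝ) ≤ 4*η^2*G^2*e^2/s^2 := by positivity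
    have step1 : ∀ t ∈ Finset.Icc 1 T, ∑ i ∈ B t, f t i ≤
        (s:ℝ) * (4*η^2*G^2*e^2/s^2) + (if i0 ∈ B t then C1 else 0) := by
      intro t ht
      rw [Finset.mem_Icc] at ht
      calc ∑ i ∈ B t, f t i
          ≤ ∑ i ∈ B t, ((4*η^2*G^2*e^2/s^2) + (if i = i0 then C1 else 0)) := by
            refine Finset.sum_le_sum fun i hi => ?_
            have h := hf t ht.1 ht.2 i
            by_cases hii : i = i0
            · rw [if_pos hii] at h ⊢; linarith
            · rw [if_neg hii] at h ⊢; linarith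
        _ = (s:ℝ) * (4*η^2*G^2*e^2/s^2) + (if i0 ∈ B t then C1 else 0) := by
            rw [Finset.sum_add_distrib, Finset.sum_const, hB t,
              Finset.sum_ite_eq' (B t) i0 (fun _ => C1), nsmul_eq_mul]
    calc ∑ t ∈ Finset.Icc 1 T, ∑ i ∈ B t, f t i
        ≤ ∑ t ∈ Finset.Icc 1 T,
            ((s:ℝ) * (4*η^2*G^2*e^2/s^2) + (if i0 ∈ B t then C1 else 0)) :=
          Finset.sum_le_sum step1
      _ = (T:ℝ) * ((s:ℝ) * (4*η^2*G^2*e^2/s^2))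
            + ∑ t ∈ Finset.Icc 1 T, (if i0 ∈ B t then C1 else 0) := by
          rw [Finset.sum_add_distrib, Finset.sum_const, Nat.card_Icc, nsmul_eq_mul]
          norm_num
      _ ≤ (T:ℝ) * ((s:ℝ) * (4*η^2*G^2*e^2/s^2)) + (e:ℝ) * C1 := by
          have heq : ∑ t ∈ Finset.Icc 1 T, (if i0 ∈ B t then C1 else 0)
              = (((Finset.Icc 1 T).filter (fun u => i0 ∈ B u)).card : ℝ) * C1 := by
            rw [← Finset.sum_filter, Finset.sum_const, nsmul_eq_mul]
          rw [heq]
          have hle : (((Finset.Icc 1 T).filter (fun u => i0 ∈ B u)).card : ℝ) ≤ e := by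
            exact_mod_cast hcntT
          have := mul_le_mul_of_nonneg_right hle hC1
          linarith
      _ ≤ 8*G^2*e^2*T*η^2/s + C1 * e := by
          have h1 : (T:ℝ) * ((s:ℝ) * (4*η^2*G^2*e^2/s^2)) = 4*(G^2*e^2*T*η^2/s) := by
            field_simp
          have h2 : (0:ℝ) ≤ 4*(G^2*e^2*T*η^2/s) := by positivity
          have h3 : 8*G^2*e^2*T*η^2/s = 8*(G^2*e^2*T*η^2/s) := by ring
          rw [h1, h3]
          nlinarith [h2]
  constructor
  · refine Real.sqrt_le_sqrt ?_
    have := hsummain (64*G^2) (by positivity) _ htermA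
    calc ∑ t ∈ Finset.Icc 1 T, ∑ i ∈ B t,
          ((⟪θA (t - 1), xA i⟫ - 2 * y i) - (⟪θA' (t - 1), xA' i⟫ - 2 * y' i)) ^ 2
        ≤ 8*G^2*e^2*T*η^2/s + 64*G^2 * e := this
      _ = 8 * G ^ 2 * e ^ 2 * T * η ^ 2 / s + 64 * G ^ 2 * e := by ring
  · refine Real.sqrt_le_sqrt ?_
    have := hsummain ((8*G-4)^2) (by positivity) _ htermB
    calc ∑ t ∈ Finset.Icc 1 T, ∑ i ∈ B t,
          (⟪θB (t - 1), xB i⟫ - ⟪θB' (t - 1), xB' i⟫) ^ 2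
        ≤ 8*G^2*e^2*T*η^2/s + (8*G-4)^2 * e := this
      _ = 8 * G ^ 2 * e ^ 2 * T * η ^ 2 / s + (8 * G - 4) ^ 2 * e := by ring
end

section
/- Let x_1,...,x_n ∈ ℝ^d with ‖x_i‖₂ ≤ 1, y_i ∈ {−1,1}, and suppose the iterates follow mini-batch gradient descent under the degree-3 minimax approximation of the sigmoid: θ_t = θ_{t−1} − (η/s) Σ_{i∈B_t} [−0.004(θ_{t−1}ᵀx_i)³ + 0.197·θ_{t−1}ᵀx_i − 0.5y_i] x_i, with constant learning rate η > 0 and batches B_t of size s. If max_{1≤i≤n} |θ_0ᵀx_i| = ε < 2, then for every iteration t with 1 ≤ t ≤ T̄_ε := ⌈log_{1+η/4}(5.2/(2+ε))⌉ and every i ∈ {1,...,n}, |θ_{t−1}ᵀx_i| < 3.2; consequently, since |−0.004z³ + 0.197z| < 0.5 for |z| < 3.2, the coefficient f_{i,t} := −0.004(θ_{t−1}ᵀx_i)³ + 0.197·θ_{t−1}ᵀx_i − 0.5y_i satisfies sign(f_{i,t}) = −y_i for all i ∈ B_t. -/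
open Finset
open scoped RealInnerProductSpace

set_option maxHeartbeats 1000000 in
/-- Label recovery under the degree-3 minimax approximation of the sigmoid: if
`max_i |θ_0ᵀx_i| = ε < 2`, then for all `1 ≤ t ≤ ⌈log_{1+η/4}(5.2/(2+ε))⌉` one has
`|θ_{t-1}ᵀx_i| < 3.2` for all `i`, and consequently the coefficients
`f_{i,t} = -0.004(θ_{t-1}ᵀx_i)³ + 0.197 θ_{t-1}ᵀx_i - 0.5 y_i` satisfy
`sign(f_{i,t}) = -y_i` for `i` in the batch. -/
theorem stmt17 (d n s : ℕ) (hn : 0 < n) (hs : 0 < s)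
    (x : Fin n → EuclideanSpace ℝ (Fin d)) (hx : ∀ i, ‖x i‖ ≤ 1)
    (y : Fin n → ℝ) (hy : ∀ i, y i = 1 ∨ y i = -1)
    (B : ℕ → Finset (Fin n)) (hB : ∀ t, (B t).card = s)
    (η : ℝ) (hη : 0 < η)
    (θ : ℕ → EuclideanSpace ℝ (Fin d))
    (hupd : ∀ t : ℕ, 1 ≤ t →
      θ t = θ (t - 1) - (η / s) •
        ∑ i ∈ B t,
          (-0.004 * (⟪θ (t - 1), x i⟫) ^ 3 + 0.197 * ⟪θ (t - 1), x i⟫ - 0.5 * y i) • x i)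
    (ε : ℝ) (hε : (⨆ i, |⟪θ 0, x i⟫|) = ε) (hε2 : ε < 2) :
    ∀ t : ℕ, 1 ≤ t → (t : ℤ) ≤ ⌈Real.logb (1 + η / 4) (5.2 / (2 + ε))⌉ →
      (∀ i, |⟪θ (t - 1), x i⟫| < 3.2) ∧
      ∀ i ∈ B t,
        Real.sign
          (-0.004 * (⟪θ (t - 1), x i⟫) ^ 3 + 0.197 * ⟪θ (t - 1), x i⟫ - 0.5 * y i) =
          -y i := by
  have hb1 : (1:ℝ) < 1 + η / 4 := by linarith
  have hεle : ∀ i, |⟪θ 0, x i⟫| ≤ ε := by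
    intro i; rw [← hε]
    exact le_ciSup (f := fun i => |⟪θ 0, x i⟫|) (Set.Finite.bddAbove (Set.finite_range _)) i
  have hε0 : 0 ≤ ε := le_trans (abs_nonneg _) (hεle ⟨0, hn⟩)
  have hs0 : (0:ℝ) < s := by exact_mod_cast hs
  -- Key invariant by induction
  have key : ∀ t : ℕ, (1 + η / 4) ^ t * (ε + 2) ≤ 5.2 →
      ∀ i, |⟪θ t, x i⟫| + 2 ≤ (1 + η / 4) ^ t * (ε + 2) := by
    intro t
    induction t with
    | zero =>
      intro _ i
      have := hεle i
      simp only [pow_zero, one_mul]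
      linarith
    | succ t ih =>
      intro h52 j
      have hbt : (1:ℝ) ≤ (1 + η / 4) ^ t := one_le_pow₀ hb1.le
      have hbt1 : (1:ℝ) ≤ (1 + η / 4) ^ (t+1) := one_le_pow₀ hb1.le
      set C : ℝ := (1 + η / 4) ^ t * (ε + 2) with hCdef
      have hC2 : 2 ≤ C := by nlinarith
      have hmono : C ≤ (1 + η / 4) ^ (t+1) * (ε + 2) := by
        rw [pow_succ]
        nlinarith [pow_pos (show (0:ℝ) < 1 + η/4 by linarith) t]
      have hC52 : C ≤ 5.2 := le_trans hmono h52
      have hz := ih hC52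
      -- coefficient bound
      have hf : ∀ i, |(-0.004 * (⟪θ t, x i⟫) ^ 3 + 0.197 * ⟪θ t, x i⟫ - 0.5 * y i)|
          ≤ 0.25 * C := by
        intro i
        have hzi := hz i
        set a := ⟪θ t, x i⟫ with hadef
        have ha : |a| ≤ C - 2 := by linarith
        obtain ⟨hl, hr⟩ := abs_le.mp ha
        have hM : (0:ℝ) ≤ C - 2 := le_trans (abs_nonneg a) ha
        have hM32 : C - 2 ≤ 3.2 := by linarith
        have hp : |(-0.004 * a ^ 3 + 0.197 * a)| ≤ 0.25 * (C - 2) := by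
          rw [abs_le]
          constructor <;>
            nlinarith [mul_nonneg (sub_nonneg.mpr hr) (sub_nonneg.mpr (by linarith : -(C-2) ≤ a)),
              sq_nonneg a, sq_nonneg (a - (C-2)), sq_nonneg (a + (C-2)),
              mul_nonneg (mul_nonneg hM hM) hM]
        have hyi : |y i| = 1 := by rcases hy i with h | h <;> simp [h]
        calc |(-0.004 * a ^ 3 + 0.197 * a - 0.5 * y i)|
            ≤ |(-0.004 * a ^ 3 + 0.197 * a)| + |0.5 * y i| := abs_sub _ _
          _ ≤ 0.25 * (C - 2) + 0.5 := by
              rw [abs_mul, hyi, mul_one]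
              have h05 : |(0.5:ℝ)| = 0.5 := by norm_num
              rw [h05]; linarith
          _ = 0.25 * C := by ring
      -- update expansion
      have hup := hupd (t+1) (Nat.le_add_left 1 t)
      simp only [Nat.add_sub_cancel] at hup
      have hin : ⟪θ (t+1), x j⟫ = ⟪θ t, x j⟫ - (η / s) *
          ∑ i ∈ B (t+1),
            (-0.004 * (⟪θ t, x i⟫) ^ 3 + 0.197 * ⟪θ t, x i⟫ - 0.5 * y i) * ⟪x i, x j⟫ := by
        rw [hup, inner_sub_left, real_inner_smul_left, sum_inner]
        simp only [real_inner_smul_left]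
      have hsum : |∑ i ∈ B (t+1),
          (-0.004 * (⟪θ t, x i⟫) ^ 3 + 0.197 * ⟪θ t, x i⟫ - 0.5 * y i) * ⟪x i, x j⟫|
          ≤ s * (0.25 * C) := by
        calc |∑ i ∈ B (t+1),
            (-0.004 * (⟪θ t, x i⟫) ^ 3 + 0.197 * ⟪θ t, x i⟫ - 0.5 * y i) * ⟪x i, x j⟫|
            ≤ ∑ i ∈ B (t+1),
              |(-0.004 * (⟪θ t, x i⟫) ^ 3 + 0.197 * ⟪θ t, x i⟫ - 0.5 * y i) * ⟪x i, x j⟫| :=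
              Finset.abs_sum_le_sum_abs _ _
          _ ≤ ∑ _i ∈ B (t+1), 0.25 * C := by
              apply Finset.sum_le_sum
              intro i _
              rw [abs_mul]
              have h1 : |⟪x i, x j⟫| ≤ 1 := by
                calc |⟪x i, x j⟫| ≤ ‖x i‖ * ‖x j‖ := abs_real_inner_le_norm _ _
                  _ ≤ 1 := by nlinarith [hx i, hx j, norm_nonneg (x i), norm_nonneg (x j)]
              calc |(-0.004 * (⟪θ t, x i⟫) ^ 3 + 0.197 * ⟪θ t, x i⟫ - 0.5 * y i)| * |⟪x i, x j⟫|
                  ≤ (0.25 * C) * 1 :=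
                    mul_le_mul (hf i) h1 (abs_nonneg _) (by linarith)
                _ = 0.25 * C := by ring
          _ = s * (0.25 * C) := by
              rw [Finset.sum_const, hB, nsmul_eq_mul]
      have hzj := hz j
      have habs2 : |⟪θ (t+1), x j⟫| ≤ |⟪θ t, x j⟫| + (η / s) * (s * (0.25 * C)) := by
        rw [hin]
        calc |⟪θ t, x j⟫ - (η / s) * _| ≤ |⟪θ t, x j⟫| + |(η / s) * _| := abs_sub _ _
          _ ≤ |⟪θ t, x j⟫| + (η / s) * (s * (0.25 * C)) := by
              rw [abs_mul, abs_of_pos (div_pos hη hs0)]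
              have := mul_le_mul_of_nonneg_left hsum (le_of_lt (div_pos hη hs0))
              linarith
      have hη4 : (η / s) * (s * (0.25 * C)) = (η / 4) * C := by
        field_simp; ring
      rw [pow_succ]
      nlinarith [hzj]
  -- the main statement
  intro t ht htle
  set L := Real.logb (1 + η / 4) (5.2 / (2 + ε)) with hLdef
  have hfrac : (0:ℝ) < 5.2 / (2 + ε) := by positivity
  have hlt : ((t:ℝ) - 1) < L := by
    have h1 : ((t:ℝ)) ≤ (⌈L⌉ : ℝ) := by exact_mod_cast htle
    have h2 : (⌈L⌉ : ℝ) < L + 1 := Int.ceil_lt_add_one L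
    linarith
  have hb0 : (0:ℝ) < 1 + η / 4 := by linarith
  have hpowlt : (1 + η / 4) ^ (t - 1) * (ε + 2) < 5.2 := by
    have hc : ((t - 1 : ℕ) : ℝ) = (t : ℝ) - 1 := by
      rw [Nat.cast_sub ht]; simp
    have hr : (1 + η / 4) ^ ((t - 1 : ℕ) : ℝ) < (1 + η / 4) ^ L :=
      (Real.rpow_lt_rpow_left_iff hb1).mpr (by rw [hc]; exact hlt)
    rw [Real.rpow_natCast, hLdef, Real.rpow_logb hb0 (ne_of_gt hb1) hfrac] at hr
    rw [lt_div_iff₀ (by linarith : (0:ℝ) < 2 + ε)] at hr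
    linarith
  have hzb := key (t - 1) (le_of_lt hpowlt)
  have habs : ∀ i, |⟪θ (t - 1), x i⟫| < 3.2 := by
    intro i
    have := hzb i
    linarith
  refine ⟨habs, ?_⟩
  intro i _
  have h32 := habs i
  set a := ⟪θ (t - 1), x i⟫ with hadef
  obtain ⟨hl, hr⟩ := abs_lt.mp h32
  rcases hy i with h | h
  · rw [h]
    have hq : (0:ℝ) < 39.01 - a^2 - 3.2*a := by
      nlinarith [mul_pos (show (0:ℝ) < 3.2 - a by linarith) (show (0:ℝ) < 3.2 + a by linarith)]
    have hneg : -0.004 * a ^ 3 + 0.197 * a - 0.5 * 1 < 0 := by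
      nlinarith [mul_pos (show (0:ℝ) < 3.2 - a by linarith) hq]
    rw [Real.sign_of_neg hneg]
  · rw [h]
    have hq : (0:ℝ) < 39.01 - a^2 + 3.2*a := by
      nlinarith [mul_pos (show (0:ℝ) < 3.2 - a by linarith) (show (0:ℝ) < 3.2 + a by linarith)]
    have hpos : 0 < -0.004 * a ^ 3 + 0.197 * a - 0.5 * (-1) := by
      nlinarith [mul_pos (show (0:ℝ) < 3.2 + a by linarith) hq]
    rw [Real.sign_of_pos hpos]
    norm_num
end
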